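/- arXiv:1603.00051 — 8 statements merged into one kernel-verified Lean document; each statement's English description precedes it below -/
import Mathlib

section
/- Let V ⊆ Z^n be finite and L ⊆ Z^n be such that {V + l : l ∈ L} tiles Z^n. Let p be a prime not dividing |V|. Then {pV + l : l ∈ L} is also a tiling of Z^n, where pV = {pv : v ∈ V}. -/
/-- A tiling of `ℤ^n` by translates of `V` with translate set `L`:
every point has a unique representation `v + l` with `v ∈ V`, `l ∈ L`. -/
def IsTiling {n : ℕ} (V L : Set (Fin n → ℤ)) : Prop :=
  ∀ x : Fin n → ℤ, ∃! p : (Fin n → ℤ) × (Fin n → ℤ),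
    p.1 ∈ V ∧ p.2 ∈ L ∧ p.1 + p.2 = x

namespace TilingDilationAux

variable {n : ℕ} {W L : Set (Fin n → ℤ)}

/-- The `V`-component of the unique representation of `y`. -/
noncomputable def tfst (hT : IsTiling W L) (y : Fin n → ℤ) : Fin n → ℤ :=
  (hT y).choose.1

/-- The `L`-component of the unique representation of `y`. -/
noncomputable def tsnd (hT : IsTiling W L) (y : Fin n → ℤ) : Fin n → ℤ :=
  (hT y).choose.2

theorem tfst_mem (hT : IsTiling W L) (y : Fin n → ℤ) : tfst hT y ∈ W :=
  (hT y).choose_spec.1.1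

theorem tsnd_mem (hT : IsTiling W L) (y : Fin n → ℤ) : tsnd hT y ∈ L :=
  (hT y).choose_spec.1.2.1

theorem tadd (hT : IsTiling W L) (y : Fin n → ℤ) : tfst hT y + tsnd hT y = y :=
  (hT y).choose_spec.1.2.2

theorem tuniq (hT : IsTiling W L) {a b y : Fin n → ℤ} (ha : a ∈ W) (hb : b ∈ L)
    (hab : a + b = y) : a = tfst hT y ∧ b = tsnd hT y := by
  have h := (hT y).choose_spec.2 (a, b) ⟨ha, hb, hab⟩
  exact ⟨congrArg Prod.fst h, congrArg Prod.snd h⟩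

theorem sub_tfst_mem (hT : IsTiling W L) (y : Fin n → ℤ) : y - tfst hT y ∈ L := by
  have h : tsnd hT y = y - tfst hT y := eq_sub_of_add_eq' (tadd hT y)
  rw [← h]
  exact tsnd_mem hT y

/-- Splitting a sum over `ZMod p` into the term at `0` and the rest. -/
theorem sum_split (p : ℕ) [NeZero p] (h : ZMod p → (Fin n → ℤ)) :
    ∑ i : ZMod p, h i = h 0 + ∑ i : {i : ZMod p // i ≠ 0}, h i.1 := by
  classical
  have e1 : ∑ i ∈ Finset.univ.erase (0 : ZMod p), h i
      = ∑ i : {i : ZMod p // i ≠ 0}, h i.1 :=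
    Finset.sum_subtype (p := fun i : ZMod p => i ≠ 0) _ (fun i => by simp) h
  rw [← Finset.add_sum_erase _ h (Finset.mem_univ (0 : ZMod p)), e1]

/-- Key counting step: every point has at least one representation `x = p • v + l`. -/
theorem exists_rep {V : Finset (Fin n → ℤ)} (hT : IsTiling (↑V) L) {p : ℕ}
    (hp : p.Prime) (hpV : ¬ p ∣ V.card) (x : Fin n → ℤ) :
    ∃ v ∈ V, x - (p : ℤ) • v ∈ L := by
  by_contra hcon
  push_neg at hcon
  classical
  haveI : NeZero p := ⟨hp.ne_zero⟩
  haveI : Fact p.Prime := ⟨hp⟩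
  -- the set of `p`-tuples from `V` whose sum leaves a remainder in `L`
  let α := {f : ZMod p → {v // v ∈ V} // (x - ∑ i : ZMod p, (f i : Fin n → ℤ)) ∈ L}
  -- bijection with tuples indexed by nonzero positions
  let β := {i : ZMod p // i ≠ 0} → {v // v ∈ V}
  let Y : β → (Fin n → ℤ) := fun g => x - ∑ i : {i : ZMod p // i ≠ 0}, (g i : Fin n → ℤ)
  have hdmem : ∀ g : β, tfst hT (Y g) ∈ V := fun g => tfst_mem hT (Y g)
  let F : β → (ZMod p → {v // v ∈ V}) := fun g i =>
    if h : i = 0 then ⟨tfst hT (Y g), hdmem g⟩ else g ⟨i, h⟩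
  have hF0 : ∀ g : β, F g 0 = ⟨tfst hT (Y g), hdmem g⟩ := fun g => dif_pos rfl
  have hFne : ∀ (g : β) (i : ZMod p) (h : i ≠ 0), F g i = g ⟨i, h⟩ :=
    fun g i h => dif_neg h
  have hmemF : ∀ g : β, (x - ∑ i : ZMod p, (F g i : Fin n → ℤ)) ∈ L := by
    intro g
    have hs : ∑ i : ZMod p, (F g i : Fin n → ℤ)
        = (F g 0 : Fin n → ℤ) + ∑ i : {i : ZMod p // i ≠ 0}, (F g i.1 : Fin n → ℤ) :=
      sum_split p _
    have hrest : ∑ i : {i : ZMod p // i ≠ 0}, (F g i.1 : Fin n → ℤ)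
        = ∑ i : {i : ZMod p // i ≠ 0}, (g i : Fin n → ℤ) :=
      Finset.sum_congr rfl fun i _ => by rw [hFne g i.1 i.2]
    rw [hs, hF0 g, hrest]
    have key : x - (((⟨tfst hT (Y g), hdmem g⟩ : {v // v ∈ V}) : Fin n → ℤ)
        + ∑ i : {i : ZMod p // i ≠ 0}, (g i : Fin n → ℤ)) = Y g - tfst hT (Y g) := by
      show x - (tfst hT (Y g) + ∑ i : {i : ZMod p // i ≠ 0}, (g i : Fin n → ℤ))
        = (x - ∑ i : {i : ZMod p // i ≠ 0}, (g i : Fin n → ℤ)) - tfst hT (Y g)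
      abel
    rw [key]
    exact sub_tfst_mem hT (Y g)
  let equiv1 : α ≃ β :=
    { toFun := fun f i => f.1 i.1
      invFun := fun g => ⟨F g, hmemF g⟩
      left_inv := by
        intro f
        apply Subtype.ext
        funext i
        show F (fun j : {i : ZMod p // i ≠ 0} => f.1 j.1) i = f.1 i
        by_cases h : i = 0
        · subst h
          rw [hF0]
          apply Subtype.ext
          show tfst hT (Y (fun j : {i : ZMod p // i ≠ 0} => f.1 j.1)) = (f.1 0 : Fin n → ℤ)
          have hs : ∑ i : ZMod p, (f.1 i : Fin n → ℤ)
              = (f.1 0 : Fin n → ℤ) + ∑ i : {i : ZMod p // i ≠ 0}, (f.1 i.1 : Fin n → ℤ) :=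
            sum_split p _
          have hadd : (f.1 0 : Fin n → ℤ) + (x - ∑ i : ZMod p, (f.1 i : Fin n → ℤ))
              = Y (fun j : {i : ZMod p // i ≠ 0} => f.1 j.1) := by
            rw [hs]
            show _ = x - ∑ i : {i : ZMod p // i ≠ 0}, (f.1 i.1 : Fin n → ℤ)
            abel
          exact ((tuniq hT (f.1 0).2 f.2 hadd).1).symm
        · rw [hFne _ i h]
      right_inv := by
        intro g
        funext i
        show F g i.1 = g i
        rw [hFne g i.1 i.2] }
  -- cardinality of α
  have hcard : Nat.card α = V.card ^ (p - 1) := by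
    rw [Nat.card_congr equiv1]
    have h2 : Fintype.card {i : ZMod p // i ≠ 0} = p - 1 := by
      have h3 := Fintype.card_subtype_compl (fun i : ZMod p => i = 0)
      rw [Fintype.card_subtype_eq (0 : ZMod p), ZMod.card] at h3
      exact h3
    rw [Nat.card_eq_fintype_card, Fintype.card_fun, h2, Fintype.card_coe]
  -- the rotation action of `ZMod p`
  letI : SMul (Multiplicative (ZMod p)) α :=
    ⟨fun c f => ⟨fun i => f.1 (i + c.toAdd), by
      have h2 : ∑ i : ZMod p, ((f.1 (i + c.toAdd)) : Fin n → ℤ)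
          = ∑ i : ZMod p, (f.1 i : Fin n → ℤ) :=
        Fintype.sum_equiv (Equiv.addRight c.toAdd) _ _ (fun i => rfl)
      show (x - ∑ i : ZMod p, ((f.1 (i + c.toAdd)) : Fin n → ℤ)) ∈ L
      rw [h2]
      exact f.2⟩⟩
  letI : MulAction (Multiplicative (ZMod p)) α :=
    { one_smul := fun f => by
        apply Subtype.ext
        funext i
        show f.1 (i + Multiplicative.toAdd 1) = f.1 i
        rw [toAdd_one, add_zero]
      mul_smul := fun a b f => by
        apply Subtype.ext
        funext i
        show f.1 (i + Multiplicative.toAdd (a * b)) = f.1 (i + a.toAdd + b.toAdd)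
        rw [toAdd_mul, add_assoc] }
  have hG : IsPGroup p (Multiplicative (ZMod p)) := by
    apply IsPGroup.of_card (n := 1)
    rw [Nat.card_congr Multiplicative.toAdd, Nat.card_eq_fintype_card, ZMod.card, pow_one]
  -- fixed points are empty
  have hfix : Nat.card (MulAction.fixedPoints (Multiplicative (ZMod p)) α) = 0 := by
    rw [Nat.card_eq_zero]
    left
    refine ⟨fun q => ?_⟩
    obtain ⟨f, hf⟩ := q
    rw [MulAction.mem_fixedPoints] at hf
    have hconst : ∀ i : ZMod p, f.1 i = f.1 0 := by
      intro i
      have h0 : f.1 (0 + (Multiplicative.ofAdd i).toAdd) = f.1 0 :=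
        congrArg (fun t : α => t.1 0) (hf (Multiplicative.ofAdd i))
      simpa using h0
    have hsum : ∑ i : ZMod p, (f.1 i : Fin n → ℤ) = (p : ℤ) • ((f.1 0 : Fin n → ℤ)) := by
      rw [Finset.sum_congr rfl (fun i _ => by rw [hconst i])]
      rw [Finset.sum_const, Finset.card_univ, ZMod.card, Nat.cast_smul_eq_nsmul]
    have hmem := f.2
    rw [hsum] at hmem
    exact hcon (f.1 0 : Fin n → ℤ) (f.1 0).2 hmem
  have hmod := hG.card_modEq_card_fixedPoints α
  rw [hcard, hfix] at hmod
  have hdvd : p ∣ V.card ^ (p - 1) := Nat.modEq_zero_iff_dvd.mp hmod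
  exact hpV (hp.dvd_of_dvd_pow hdvd)

end TilingDilationAux

open TilingDilationAux in
theorem stmt_1 {n : ℕ} (V : Finset (Fin n → ℤ)) (L : Set (Fin n → ℤ))
    (hT : IsTiling (↑V) L) (p : ℕ) (hp : p.Prime) (hpV : ¬ p ∣ V.card) :
    IsTiling ((fun v => (p : ℤ) • v) '' ↑V) L := by
  classical
  intro x
  have hVcard : V.card ≠ 0 := fun h => hpV (h ▸ dvd_zero p)
  have hVne : V.Nonempty := Finset.card_pos.mp (Nat.pos_of_ne_zero hVcard)
  have hex : ∀ y : Fin n → ℤ, ∃ v ∈ V, y - (p : ℤ) • v ∈ L :=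
    fun y => exists_rep hT hp hpV y
  -- the key exact count: for all y, the number of v ∈ V with y - p•v ∈ L is exactly 1
  have hcount : ∀ y : Fin n → ℤ, (V.filter (fun v => y - (p : ℤ) • v ∈ L)).card = 1 := by
    intro y
    obtain ⟨u₀, hu₀⟩ := hVne
    set c : Fin n → ℤ := y + u₀ with hc
    -- for each fixed v, exactly one u ∈ V with (c - p•v) - u ∈ L
    have h1 : ∀ v ∈ V, (V.filter (fun u => (c - (p : ℤ) • v) - u ∈ L)).card = 1 := by
      intro v _
      rw [Finset.card_eq_one]
      refine ⟨tfst hT (c - (p : ℤ) • v), ?_⟩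
      ext u
      simp only [Finset.mem_filter, Finset.mem_singleton]
      constructor
      · rintro ⟨huV, huL⟩
        have hadd : u + ((c - (p : ℤ) • v) - u) = c - (p : ℤ) • v := by abel
        exact (tuniq hT (Finset.mem_coe.mpr huV) huL hadd).1
      · rintro rfl
        exact ⟨Finset.mem_coe.mp (tfst_mem hT _), sub_tfst_mem hT _⟩
    -- double counting
    have h2 : ∑ u ∈ V, (V.filter (fun v => (c - u) - (p : ℤ) • v ∈ L)).card = V.card := by
      have hswap : ∀ u : Fin n → ℤ,
          (V.filter (fun v => (c - u) - (p : ℤ) • v ∈ L))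
            = (V.filter (fun v => (c - (p : ℤ) • v) - u ∈ L)) := by
        intro u
        refine Finset.filter_congr fun v _ => ?_
        rw [sub_right_comm]
      calc ∑ u ∈ V, (V.filter (fun v => (c - u) - (p : ℤ) • v ∈ L)).card
          = ∑ u ∈ V, ∑ v ∈ V, ite ((c - (p : ℤ) • v) - u ∈ L) 1 0 := by
            refine Finset.sum_congr rfl fun u _ => ?_
            rw [hswap u, Finset.card_filter]
        _ = ∑ v ∈ V, ∑ u ∈ V, ite ((c - (p : ℤ) • v) - u ∈ L) 1 0 := Finset.sum_comm
        _ = ∑ v ∈ V, (V.filter (fun u => (c - (p : ℤ) • v) - u ∈ L)).card := by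
            refine Finset.sum_congr rfl fun v _ => ?_
            rw [Finset.card_filter]
        _ = ∑ v ∈ V, 1 := Finset.sum_congr rfl h1
        _ = V.card := by rw [Finset.sum_const, smul_eq_mul, mul_one]
    have h3 : ∀ u ∈ V, 1 ≤ (V.filter (fun v => (c - u) - (p : ℤ) • v ∈ L)).card := by
      intro u _
      obtain ⟨v, hvV, hvL⟩ := hex (c - u)
      exact Finset.card_pos.mpr ⟨v, Finset.mem_filter.mpr ⟨hvV, hvL⟩⟩
    have hcy : c - u₀ = y := by rw [hc]; abel
    by_contra hne
    have hgt : 1 < (V.filter (fun v => (c - u₀) - (p : ℤ) • v ∈ L)).card := by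
      rcases Nat.lt_or_ge 1 ((V.filter (fun v => (c - u₀) - (p : ℤ) • v ∈ L)).card) with h | h
      · exact h
      · exfalso
        apply hne
        have hle := h3 u₀ hu₀
        have heq : (V.filter (fun v => (c - u₀) - (p : ℤ) • v ∈ L)).card = 1 :=
          le_antisymm h hle
        rwa [hcy] at heq
    have hlt : V.card < V.card := by
      calc V.card = ∑ _u ∈ V, 1 := by rw [Finset.sum_const, smul_eq_mul, mul_one]
        _ < ∑ u ∈ V, (V.filter (fun v => (c - u) - (p : ℤ) • v ∈ L)).card :=
            Finset.sum_lt_sum h3 ⟨u₀, hu₀, hgt⟩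
        _ = V.card := h2
    exact absurd hlt (lt_irrefl _)
  -- assemble the unique representation
  obtain ⟨v, hv⟩ := Finset.card_eq_one.mp (hcount x)
  have hvmem : v ∈ V.filter (fun v => x - (p : ℤ) • v ∈ L) := by
    rw [hv]; exact Finset.mem_singleton_self v
  rw [Finset.mem_filter] at hvmem
  refine ⟨((p : ℤ) • v, x - (p : ℤ) • v),
    ⟨⟨v, Finset.mem_coe.mpr hvmem.1, rfl⟩, hvmem.2, ?_⟩, ?_⟩
  · show (p : ℤ) • v + (x - (p : ℤ) • v) = x
    abel
  · rintro ⟨q1, q2⟩ ⟨hq1, hq2, hq3⟩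
    obtain ⟨w, hwV, hw⟩ := hq1
    have hw' : (p : ℤ) • w = q1 := hw
    have hq3' : (p : ℤ) • w + q2 = x := by rw [hw']; exact hq3
    have hq2' : q2 = x - (p : ℤ) • w := eq_sub_of_add_eq' hq3'
    have hwmem : w ∈ V.filter (fun v => x - (p : ℤ) • v ∈ L) := by
      rw [Finset.mem_filter]
      refine ⟨Finset.mem_coe.mp hwV, ?_⟩
      rw [← hq2']
      exact hq2
    have hwv : w = v := by
      rw [hv] at hwmem
      exact Finset.mem_singleton.mp hwmem
    subst hwv
    rw [← hw', hq2']
end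

section
/- Let V ⊆ Z^n be finite and L ⊆ Z^n be such that {V + l : l ∈ L} tiles Z^n. Then {(-V) + l : l ∈ L} is also a tiling of Z^n, where -V = {-v : v ∈ V}. -/
theorem stmt_2 {n : ℕ} (V : Finset (Fin n → ℤ)) (L : Set (Fin n → ℤ))
    (hT : IsTiling (↑V) L) :
    IsTiling ((fun v => -v) '' ↑V) L := by
  classical
  -- Uniqueness of v ∈ V with y + v ∈ L
  have uniq : ∀ (y v w : Fin n → ℤ), v ∈ V → w ∈ V → y + v ∈ L → y + w ∈ L → v = w := by
    intro y v w hv hw hyv hyw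
    obtain ⟨p, _, hup⟩ := hT (y + v + w)
    have h1 := hup (w, y + v) ⟨Finset.mem_coe.mpr hw, hyv, by ring⟩
    have h2 := hup (v, y + w) ⟨Finset.mem_coe.mpr hv, hyw, by ring⟩
    have h := h1.trans h2.symm
    exact (congrArg Prod.fst h).symm
  have hle : ∀ y : Fin n → ℤ, (V.filter fun v => y + v ∈ L).card ≤ 1 := by
    intro y
    apply Finset.card_le_one.mpr
    intro a ha b hb
    simp only [Finset.mem_filter] at ha hb
    exact uniq y a b ha.1 hb.1 ha.2 hb.2
  -- the tiling hypothesis: exactly one v with x - v ∈ L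
  have hone : ∀ x : Fin n → ℤ, (V.filter fun v => x - v ∈ L).card = 1 := by
    intro x
    obtain ⟨p, ⟨hp1, hp2, hp3⟩, hup⟩ := hT x
    apply Finset.card_eq_one.mpr
    refine ⟨p.1, ?_⟩
    ext v
    simp only [Finset.mem_filter, Finset.mem_singleton]
    constructor
    · rintro ⟨hv, hvL⟩
      have := hup (v, x - v) ⟨Finset.mem_coe.mpr hv, hvL, by ring⟩
      exact congrArg Prod.fst this
    · rintro rfl
      refine ⟨Finset.mem_coe.mp hp1, ?_⟩
      have : x - p.1 = p.2 := by rw [← hp3]; abel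
      rw [this]; exact hp2
  -- double counting: for every x and v ∈ V, there is exactly one w ∈ V with x - v + w ∈ L
  have hsum : ∀ x : Fin n → ℤ, ∀ v ∈ V, (V.filter fun w => x - v + w ∈ L).card = 1 := by
    intro x
    have key : (∑ v ∈ V, (V.filter fun w => x - v + w ∈ L).card) = V.card := by
      simp only [Finset.card_filter]
      rw [Finset.sum_comm]
      have hterm : ∀ w ∈ V, (∑ v ∈ V, if x - v + w ∈ L then 1 else 0) = 1 := by
        intro w _
        have h2 : (∑ v ∈ V, if x - v + w ∈ L then 1 else 0)
            = ∑ v ∈ V, if x + w - v ∈ L then 1 else 0 :=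
          Finset.sum_congr rfl fun v _ => by rw [sub_add_eq_add_sub]
        rw [h2, ← Finset.card_filter]
        exact hone (x + w)
      rw [Finset.sum_congr rfl hterm]
      simp
    intro v hv
    by_contra hne
    have h0 : (V.filter fun w => x - v + w ∈ L).card = 0 := by
      have := hle (x - v)
      omega
    have hlt : (∑ u ∈ V, (V.filter fun w => x - u + w ∈ L).card) < ∑ _u ∈ V, 1 := by
      apply Finset.sum_lt_sum
      · intro i _; exact hle (x - i)
      · exact ⟨v, hv, by rw [h0]; norm_num⟩
    rw [key, Finset.sum_const, smul_eq_mul, mul_one] at hlt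
    exact lt_irrefl _ hlt
  -- conclude
  intro x
  obtain ⟨q, ⟨hq1, _, _⟩, _⟩ := hT 0
  have h1 : (V.filter fun w => x + q.1 - q.1 + w ∈ L).card = 1 :=
    hsum (x + q.1) q.1 (Finset.mem_coe.mp hq1)
  simp only [add_sub_cancel_right] at h1
  obtain ⟨v, hv⟩ := Finset.card_eq_one.mp h1
  have hvmem : v ∈ V ∧ x + v ∈ L := by
    have := hv ▸ Finset.mem_singleton_self v
    simpa using this
  refine ⟨(-v, x + v), ⟨⟨v, Finset.mem_coe.mpr hvmem.1, rfl⟩, hvmem.2, by ring⟩, ?_⟩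
  rintro ⟨a, b⟩ ⟨⟨w, hwV, rfl⟩, hbL, hab⟩
  have hb : b = x + w := by
    have : -w + b = x := hab
    rw [← this]; ring
  subst hb
  have : w = v := uniq x w v (Finset.mem_coe.mp hwV) hvmem.1 hbL hvmem.2
  subst this
  rfl
end

section
/- Let V ⊆ Z^n be finite and L ⊆ Z^n be such that {V + l : l ∈ L} tiles Z^n, and let a be an integer relatively prime to |V|. Then {aV + l : l ∈ L} is a tiling of Z^n by translates of the blow-up tile aV = {av : v ∈ V}. -/
open scoped Classical

/-- The number of `v ∈ V` such that `x - a • v ∈ L`. -/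
noncomputable def cnt {n : ℕ} (V : Finset (Fin n → ℤ)) (L : Set (Fin n → ℤ)) (a : ℤ)
    (x : Fin n → ℤ) : ℕ :=
  (V.filter (fun v => x - a • v ∈ L)).card

variable {n : ℕ} {V W : Finset (Fin n → ℤ)} {L : Set (Fin n → ℤ)}

theorem cnt_one_eq (z : Fin n → ℤ) :
    cnt V L 1 z = (V.filter (fun w => z - w ∈ L)).card := by
  simp [cnt]

theorem cnt_ite (a : ℤ) (x : Fin n → ℤ) :
    cnt V L a x = ∑ v ∈ V, (if x - a • v ∈ L then 1 else 0) := by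
  rw [cnt, Finset.card_filter]

theorem tiling_cnt_one (hT : IsTiling (↑V) L) : ∀ z, cnt V L 1 z = 1 := by
  intro z
  obtain ⟨⟨v, l⟩, ⟨hv, hl, hs⟩, huniq⟩ := hT z
  simp only at hv hl hs
  have hlz : l = z - v := by rw [← hs]; abel
  have h : V.filter (fun w => z - w ∈ L) = {v} := by
    ext w
    simp only [Finset.mem_filter, Finset.mem_singleton]
    constructor
    · rintro ⟨hw, hwL⟩
      have := huniq (w, z - w) ⟨hw, hwL, by simp⟩
      exact congrArg Prod.fst this
    · intro hwv
      rw [hwv]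
      exact ⟨hv, by rw [← hlz]; exact hl⟩
  rw [cnt_one_eq, h, Finset.card_singleton]

theorem cnt_one_tiling (h : ∀ z, cnt W L 1 z = 1) : IsTiling (↑W) L := by
  intro x
  have h1 := h x
  rw [cnt_one_eq, Finset.card_eq_one] at h1
  obtain ⟨v, hv⟩ := h1
  have hvmem : v ∈ W ∧ x - v ∈ L := by
    have : v ∈ W.filter (fun w => x - w ∈ L) := hv ▸ Finset.mem_singleton_self v
    simpa using Finset.mem_filter.mp this
  refine ⟨(v, x - v), ⟨hvmem.1, hvmem.2, by simp⟩, ?_⟩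
  rintro ⟨w, l⟩ ⟨hw, hl, hs⟩
  simp only at hw hl hs
  have hlw : l = x - w := by rw [← hs]; abel
  have hwf : w ∈ W.filter (fun u => x - u ∈ L) :=
    Finset.mem_filter.mpr ⟨hw, by rw [← hlw]; exact hl⟩
  have hwv : w = v := by rw [hv] at hwf; simpa using hwf
  subst hwv
  simp [hlw]

theorem cnt_avg (h1 : ∀ z, cnt V L 1 z = 1) (a : ℤ) (x : Fin n → ℤ) :
    ∑ w ∈ V, cnt V L a (x - w) = V.card := by
  have hsw : ∀ w v : Fin n → ℤ, x - w - a • v = (x - a • v) - w := by intro w v; abel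
  calc ∑ w ∈ V, cnt V L a (x - w)
      = ∑ w ∈ V, ∑ v ∈ V, (if (x - a • v) - w ∈ L then 1 else 0) := by
        refine Finset.sum_congr rfl fun w _ => ?_
        rw [cnt_ite]
        exact Finset.sum_congr rfl fun v _ => by rw [hsw]
    _ = ∑ v ∈ V, ∑ w ∈ V, (if (x - a • v) - w ∈ L then 1 else 0) := Finset.sum_comm
    _ = ∑ v ∈ V, cnt V L 1 (x - a • v) := by
        refine Finset.sum_congr rfl fun v _ => ?_
        rw [cnt_ite]
        exact Finset.sum_congr rfl fun w _ => by rw [one_smul]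
    _ = ∑ v ∈ V, 1 := Finset.sum_congr rfl fun v _ => h1 _
    _ = V.card := by simp

theorem V_nonempty (h1 : ∀ z, cnt V L 1 z = 1) : V.Nonempty := by
  have := h1 0
  rw [cnt] at this
  obtain ⟨v, hv⟩ := Finset.card_eq_one.mp this
  exact ⟨v, (Finset.mem_filter.mp (hv ▸ Finset.mem_singleton_self v)).1⟩

theorem squeeze_ge (h1 : ∀ z, cnt V L 1 z = 1) {a : ℤ}
    (hge : ∀ x, 1 ≤ cnt V L a x) : ∀ x, cnt V L a x = 1 := by
  intro x
  obtain ⟨v₀, hv₀⟩ := V_nonempty h1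
  have havg := cnt_avg h1 a (x + v₀)
  have hconst : ∑ w ∈ V, (1:ℕ) = V.card := by simp
  have hle : ∀ w ∈ V, (1:ℕ) ≤ cnt V L a (x + v₀ - w) := fun w _ => hge _
  have := (Finset.sum_eq_sum_iff_of_le hle).mp (by rw [havg, hconst])
  have hx := (this v₀ hv₀).symm
  simpa using hx

theorem squeeze_le (h1 : ∀ z, cnt V L 1 z = 1) {a : ℤ}
    (hle : ∀ x, cnt V L a x ≤ 1) : ∀ x, cnt V L a x = 1 := by
  intro x
  obtain ⟨v₀, hv₀⟩ := V_nonempty h1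
  have havg := cnt_avg h1 a (x + v₀)
  have hconst : ∑ w ∈ V, (1:ℕ) = V.card := by simp
  have hle' : ∀ w ∈ V, cnt V L a (x + v₀ - w) ≤ 1 := fun w _ => hle _
  have := (Finset.sum_eq_sum_iff_of_le hle').mp (by rw [havg, hconst])
  have hx := this v₀ hv₀
  simpa using hx

theorem refl_le (hT : IsTiling (↑V) L) (x : Fin n → ℤ) : cnt V L (-1) x ≤ 1 := by
  rw [cnt]
  apply Finset.card_le_one.mpr
  intro v₁ h₁ v₂ h₂
  obtain ⟨hv₁, hL₁⟩ := Finset.mem_filter.mp h₁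
  obtain ⟨hv₂, hL₂⟩ := Finset.mem_filter.mp h₂
  have e₁ : x - (-1:ℤ) • v₁ = x + v₁ := by simp [sub_neg_eq_add]
  have e₂ : x - (-1:ℤ) • v₂ = x + v₂ := by simp [sub_neg_eq_add]
  rw [e₁] at hL₁; rw [e₂] at hL₂
  obtain ⟨p, hp, huniq⟩ := hT (x + v₁ + v₂)
  have u1 := huniq (v₂, x + v₁) ⟨hv₂, hL₁, by abel⟩
  have u2 := huniq (v₁, x + v₂) ⟨hv₁, hL₂, by abel⟩
  have := u1.trans u2.symm
  exact (congrArg Prod.fst this).symm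

theorem cnt_image {b : ℤ} (hb : b ≠ 0) (c : ℤ) (x : Fin n → ℤ) :
    cnt (V.image (fun v => b • v)) L c x = cnt V L (c * b) x := by
  rw [cnt, cnt, Finset.filter_image]
  rw [Finset.card_image_of_injective _ (smul_right_injective (Fin n → ℤ) hb)]
  congr 1
  apply Finset.filter_congr
  intro v _
  rw [smul_smul]

theorem card_image_smul {b : ℤ} (hb : b ≠ 0) :
    (V.image (fun v => b • v)).card = V.card :=
  Finset.card_image_of_injective _ (smul_right_injective (Fin n → ℤ) hb)

/-! ### The Frobenius congruence -/

noncomputable def phi {n : ℕ} (p : ℕ) (ω : (Fin n → ℤ) → ZMod p) :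
    AddMonoidAlgebra (ZMod p) (Fin n → ℤ) →+ ZMod p :=
  (Finsupp.liftAddHom (fun y => AddMonoidHom.mulRight (ω y))).comp
    AddMonoidAlgebra.coeffAddEquiv.toAddMonoidHom

theorem phi_single {n : ℕ} (p : ℕ) (ω : (Fin n → ℤ) → ZMod p) (a : Fin n → ℤ) (b : ZMod p) :
    phi p ω (AddMonoidAlgebra.single a b) = b * ω a :=
  Finsupp.liftAddHom_apply_single _ a b

theorem phi_eq {n : ℕ} (p : ℕ) (ω : (Fin n → ℤ) → ZMod p)
    (f : AddMonoidAlgebra (ZMod p) (Fin n → ℤ)) :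
    phi p ω f = ∑ y ∈ f.coeff.support, f.coeff y * ω y :=
  rfl

theorem phi_mulT (p : ℕ) (ω : (Fin n → ℤ) → ZMod p) (c : ZMod p)
    (hω : ∀ y, ∑ v ∈ V, ω (v + y) = c) (f : AddMonoidAlgebra (ZMod p) (Fin n → ℤ)) :
    phi p ω ((∑ v ∈ V, AddMonoidAlgebra.single v 1) * f)
      = phi p (fun _ => 1) f * c := by
  have hTf : (∑ v ∈ V, AddMonoidAlgebra.single v (1 : ZMod p)) * f
      = ∑ v ∈ V, ∑ y ∈ f.coeff.support, AddMonoidAlgebra.single (v + y) (f.coeff y) := by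
    rw [Finset.sum_mul]
    refine Finset.sum_congr rfl fun v _ => ?_
    conv_lhs => rw [← AddMonoidAlgebra.sum_single f]
    rw [Finsupp.sum, Finset.mul_sum]
    refine Finset.sum_congr rfl fun y _ => ?_
    rw [AddMonoidAlgebra.single_mul_single, one_mul]
  rw [hTf, map_sum]
  calc ∑ v ∈ V, phi p ω (∑ y ∈ f.coeff.support, AddMonoidAlgebra.single (v + y) (f.coeff y))
      = ∑ v ∈ V, ∑ y ∈ f.coeff.support, f.coeff y * ω (v + y) := by
        refine Finset.sum_congr rfl fun v _ => ?_
        rw [map_sum]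
        exact Finset.sum_congr rfl fun y _ => phi_single _ _ _ _
    _ = ∑ y ∈ f.coeff.support, ∑ v ∈ V, f.coeff y * ω (v + y) := Finset.sum_comm
    _ = ∑ y ∈ f.coeff.support, f.coeff y * c := by
        refine Finset.sum_congr rfl fun y _ => ?_
        rw [← Finset.mul_sum, hω y]
    _ = phi p (fun _ => 1) f * c := by
        rw [phi_eq, Finset.sum_mul]
        exact Finset.sum_congr rfl fun y _ => by rw [mul_one]

theorem phi_pow (p : ℕ) [NeZero p] :
    ∀ m : ℕ, phi p (fun _ => 1) ((∑ v ∈ V, AddMonoidAlgebra.single v (1 : ZMod p)) ^ m)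
      = (V.card : ZMod p) ^ m := by
  intro m
  induction m with
  | zero =>
      rw [pow_zero, pow_zero]
      rw [AddMonoidAlgebra.one_def, phi_single]
      rw [mul_one]
  | succ m ih =>
      rw [pow_succ', phi_mulT p (fun _ => 1) (V.card : ZMod p)
        (fun y => by rw [Finset.sum_const, nsmul_eq_mul, mul_one]), ih]
      ring

theorem cnt_cast {p : ℕ} (b : ℤ) (z : Fin n → ℤ) :
    ((cnt V L b z : ℕ) : ZMod p) = ∑ v ∈ V, (if z - b • v ∈ L then (1 : ZMod p) else 0) := by
  rw [cnt_ite, Nat.cast_sum]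
  exact Finset.sum_congr rfl fun v _ => by split <;> simp

theorem cnt_prime_cast (h1 : ∀ z, cnt V L 1 z = 1) {p : ℕ} (hp : p.Prime)
    (hpk : ¬ p ∣ V.card) (x : Fin n → ℤ) : (cnt V L (p : ℤ) x : ZMod p) = 1 := by
  haveI : Fact p.Prime := ⟨hp⟩
  haveI hchar : CharP (AddMonoidAlgebra (ZMod p) (Fin n → ℤ)) p := by
    constructor
    intro m
    rw [AddMonoidAlgebra.natCast_def, AddMonoidAlgebra.single_eq_zero]
    exact ZMod.natCast_eq_zero_iff m p
  set χ : (Fin n → ℤ) → ZMod p := fun y => if x - y ∈ L then 1 else 0 with hχdef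
  have hχ : ∀ y, ∑ v ∈ V, χ (v + y) = 1 := by
    intro y
    have hcast : ((cnt V L 1 (x - y) : ℕ) : ZMod p) = 1 := by rw [h1 (x - y)]; norm_num
    rw [cnt_cast] at hcast
    rw [← hcast]
    refine Finset.sum_congr rfl fun v _ => ?_
    have e : x - (v + y) = (x - y) - (1:ℤ) • v := by rw [one_smul]; abel
    simp only [hχdef, e]
  set T : AddMonoidAlgebra (ZMod p) (Fin n → ℤ) := ∑ v ∈ V, AddMonoidAlgebra.single v 1 with hT
  have hfrob : T ^ p = ∑ v ∈ V, AddMonoidAlgebra.single (p • v) (1 : ZMod p) := by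
    rw [hT, sum_pow_char]
    exact Finset.sum_congr rfl fun v _ => by rw [AddMonoidAlgebra.single_pow, one_pow]
  have hTp : T * T ^ (p - 1) = T ^ p := by
    rw [← pow_succ', Nat.sub_add_cancel hp.one_lt.le]
  have h2 : phi p χ (T ^ p) = (V.card : ZMod p) ^ (p - 1) := by
    rw [← hTp, hT, phi_mulT p χ 1 hχ, ← hT, phi_pow, mul_one]
  have h3 : ((V.card : ℕ) : ZMod p) ^ (p - 1) = 1 := by
    refine ZMod.pow_card_sub_one_eq_one ?_
    intro h0
    exact hpk ((ZMod.natCast_eq_zero_iff _ _).mp h0)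
  have h4 : phi p χ (T ^ p) = ((cnt V L (p : ℤ) x : ℕ) : ZMod p) := by
    rw [hfrob, map_sum, cnt_cast]
    refine Finset.sum_congr rfl fun v _ => ?_
    rw [phi_single, one_mul]
    simp only [hχdef]
    have e : (p : ℤ) • v = p • v := natCast_zsmul v p
    rw [e]
  rw [← h4, h2, h3]

theorem cnt_prime_ge (h1 : ∀ z, cnt V L 1 z = 1) {p : ℕ} (hp : p.Prime)
    (hpk : ¬ p ∣ V.card) (x : Fin n → ℤ) : 1 ≤ cnt V L (p : ℤ) x := by
  rcases Nat.eq_zero_or_pos (cnt V L (p : ℤ) x) with h0 | h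
  · haveI : Fact p.Prime := ⟨hp⟩
    have hc := cnt_prime_cast h1 hp hpk x
    rw [h0] at hc
    norm_num at hc
  · exact h

theorem tiling_smul_prime (hT : IsTiling (↑V) L) {p : ℕ} (hp : p.Prime)
    (hpk : ¬ p ∣ V.card) : IsTiling (↑(V.image (fun v => (p:ℤ) • v))) L := by
  have h1 := tiling_cnt_one hT
  have hall := squeeze_ge h1 (cnt_prime_ge h1 hp hpk)
  apply cnt_one_tiling
  intro z
  have hp0 : ((p:ℤ)) ≠ 0 := by exact_mod_cast hp.pos.ne'
  rw [cnt_image hp0 1 z, one_mul]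
  exact hall z

theorem tiling_smul_neg_one (hT : IsTiling (↑V) L) :
    IsTiling (↑(V.image (fun v => (-1:ℤ) • v))) L := by
  have h1 := tiling_cnt_one hT
  have hall := squeeze_le h1 (refl_le hT)
  apply cnt_one_tiling
  intro z
  rw [cnt_image (by norm_num : (-1:ℤ) ≠ 0) 1 z, one_mul]
  exact hall z

theorem tiling_smul_nat (L : Set (Fin n → ℤ)) (k : ℕ) :
    ∀ b : ℕ, 1 ≤ b → ∀ V : Finset (Fin n → ℤ), V.card = k →
    (∀ r : ℕ, r.Prime → r ∣ b → ¬ r ∣ k) → IsTiling (↑V) L →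
    IsTiling (↑(V.image (fun v => (b : ℤ) • v))) L := by
  intro b
  induction b using Nat.strong_induction_on with
  | _ b ih =>
    intro hb V hcard hfac hT
    rcases eq_or_lt_of_le hb with h1 | h1
    · have himg : V.image (fun v => ((1:ℕ) : ℤ) • v) = V := by
        have hfun : (fun v : Fin n → ℤ => ((1:ℕ):ℤ) • v) = id := funext fun v => by
          simp
        rw [hfun, Finset.image_id]
      rw [← h1, himg]
      exact hT
    · set r := b.minFac with hrdef
      have hr : r.Prime := Nat.minFac_prime (by omega)
      have hrd : r ∣ b := Nat.minFac_dvd b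
      set c := b / r with hc
      have hbc : c * r = b := Nat.div_mul_cancel hrd
      have hcpos : 1 ≤ c := Nat.div_pos (Nat.le_of_dvd (by omega) hrd) hr.pos
      have hcb : c < b := Nat.div_lt_self (by omega) hr.one_lt
      have hfac' : ∀ s : ℕ, s.Prime → s ∣ c → ¬ s ∣ k := fun s hs hsc =>
        hfac s hs (hsc.trans ⟨r, hbc.symm⟩)
      have hTc := ih c hcb hcpos V hcard hfac' hT
      have hc0 : ((c:ℕ) : ℤ) ≠ 0 := by exact_mod_cast (by omega : c ≠ 0)
      have hVc : (V.image (fun v => (c : ℤ) • v)).card = k := by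
        rw [card_image_smul hc0]; exact hcard
      have hstep := tiling_smul_prime hTc hr (by rw [hVc]; exact hfac r hr hrd)
      have himg : (V.image (fun v => (c : ℤ) • v)).image (fun v => (r : ℤ) • v)
          = V.image (fun v => (b : ℤ) • v) := by
        rw [Finset.image_image]
        refine Finset.image_congr fun v _ => ?_
        show (r : ℤ) • ((c : ℤ) • v) = (b : ℤ) • v
        rw [smul_smul]
        congr 1
        push_cast [← hbc]
        ring
      rw [← himg]
      exact hstep

theorem stmt_3 {n : ℕ} (V : Finset (Fin n → ℤ)) (L : Set (Fin n → ℤ))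
    (hT : IsTiling (↑V) L) (a : ℤ) (ha : IsCoprime a (V.card : ℤ)) :
    IsTiling ((fun v => a • v) '' ↑V) L := by
  rw [← Finset.coe_image]
  rcases lt_trichotomy a 0 with hneg | hzero | hpos
  · -- negative case
    set b := (-a).toNat with hbdef
    have hb : ((b:ℕ) : ℤ) = -a := Int.toNat_of_nonneg (by omega)
    have hb1 : 1 ≤ b := by omega
    have hfac : ∀ r : ℕ, r.Prime → r ∣ b → ¬ r ∣ V.card := by
      intro r hr hrb hrk
      have hd1 : (r:ℤ) ∣ -a := by rw [← hb]; exact_mod_cast hrb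
      have hd2 : (r:ℤ) ∣ a := (dvd_neg).mp hd1
      have hd3 : (r:ℤ) ∣ (V.card : ℤ) := Int.natCast_dvd_natCast.mpr hrk
      have hu := ha.isUnit_of_dvd' hd2 hd3
      rw [Int.isUnit_iff] at hu
      have h2le := hr.two_le
      rcases hu with h | h
      · have : r = 1 := by exact_mod_cast h
        omega
      · have : (0:ℤ) ≤ (r:ℤ) := Int.natCast_nonneg r
        omega
    have hTb := tiling_smul_nat L V.card b hb1 V rfl hfac hT
    have hres := tiling_smul_neg_one hTb
    have himg : (V.image (fun v => (b:ℤ) • v)).image (fun v => (-1:ℤ) • v)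
        = V.image (fun v => a • v) := by
      rw [Finset.image_image]
      refine Finset.image_congr fun v _ => ?_
      show (-1:ℤ) • ((b:ℤ) • v) = a • v
      rw [smul_smul]
      congr 1
      rw [hb]
      ring
    rw [← himg]
    exact hres
  · -- a = 0
    subst hzero
    have hunit : IsUnit ((V.card : ℕ) : ℤ) := isCoprime_zero_left.mp ha
    have hcard : V.card = 1 := by
      rcases Int.isUnit_iff.mp hunit with h | h
      · exact_mod_cast h
      · omega
    obtain ⟨v₀, hv₀⟩ := Finset.card_eq_one.mp hcard
    subst hv₀
    have hLall : ∀ z : Fin n → ℤ, z - v₀ ∈ L := by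
      intro z
      obtain ⟨⟨w, l⟩, ⟨hw, hl, hs⟩, _⟩ := hT z
      simp only [Finset.coe_singleton, Set.mem_singleton_iff] at hw
      simp only at hl hs
      subst hw
      have : l = z - w := by rw [← hs]; abel
      rwa [this] at hl
    intro x
    refine ⟨(0, x), ⟨?_, ?_, by simp⟩, ?_⟩
    · simp only [Finset.coe_image, Set.mem_image]
      exact ⟨v₀, by simp, by simp⟩
    · have := hLall (x + v₀)
      simpa using this
    · rintro ⟨w, l⟩ ⟨hw, hl, hs⟩
      simp only [Finset.coe_image, Set.mem_image] at hw
      obtain ⟨u, _, hu⟩ := hw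
      simp only at hl hs
      have hw0 : w = 0 := by rw [← hu]; simp
      subst hw0
      have : l = x := by rw [← hs]; abel
      simp [this]
  · -- positive case
    set b := a.toNat with hbdef
    have hb : ((b:ℕ) : ℤ) = a := Int.toNat_of_nonneg (by omega)
    have hb1 : 1 ≤ b := by omega
    have hfac : ∀ r : ℕ, r.Prime → r ∣ b → ¬ r ∣ V.card := by
      intro r hr hrb hrk
      have hd2 : (r:ℤ) ∣ a := by rw [← hb]; exact_mod_cast hrb
      have hd3 : (r:ℤ) ∣ (V.card : ℤ) := Int.natCast_dvd_natCast.mpr hrk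
      have hu := ha.isUnit_of_dvd' hd2 hd3
      rw [Int.isUnit_iff] at hu
      have h2le := hr.two_le
      rcases hu with h | h
      · have : r = 1 := by exact_mod_cast h
        omega
      · have : (0:ℤ) ≤ (r:ℤ) := Int.natCast_nonneg r
        omega
    have hTb := tiling_smul_nat L V.card b hb1 V rfl hfac hT
    rw [hb] at hTb
    exact hTb
end

section
/- Let V ⊆ Z^n be finite and L ⊆ Z^n be such that {V + l : l ∈ L} tiles Z^n, and let a be an integer relatively prime to |V|. Then for every l ∈ L and every v, w ∈ V, the point l + a(v - w) is not in L unless v = w. -/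
namespace Stmt4Aux

open Finset

variable {n : ℕ}

open Classical in
/-- The number of `a ∈ V` with `x - s • a ∈ L`. -/
noncomputable def cnt (V : Finset (Fin n → ℤ)) (L : Set (Fin n → ℤ)) (s : ℤ)
    (x : Fin n → ℤ) : ℕ :=
  (V.filter fun a => x - s • a ∈ L).card

/-- `s • V ⊕ L` is an (exact) tiling, in counting form. -/
def Tiles (V : Finset (Fin n → ℤ)) (L : Set (Fin n → ℤ)) (s : ℤ) : Prop :=
  ∀ x, cnt V L s x = 1

open Classical in
lemma cnt_eq_sum (V : Finset (Fin n → ℤ)) (L : Set (Fin n → ℤ)) (s : ℤ) (x : Fin n → ℤ) :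
    cnt V L s x = ∑ a ∈ V, if x - s • a ∈ L then 1 else 0 := by
  rw [cnt, Finset.card_filter]

lemma two_le_cnt {V : Finset (Fin n → ℤ)} {L : Set (Fin n → ℤ)} {s : ℤ} {x v w : Fin n → ℤ}
    (hvw : v ≠ w) (hv : v ∈ V) (hw : w ∈ V)
    (h1 : x - s • v ∈ L) (h2 : x - s • w ∈ L) : 2 ≤ cnt V L s x := by
  classical
  rw [cnt]
  have hsub : ({v, w} : Finset (Fin n → ℤ)) ⊆ V.filter (fun b => x - s • b ∈ L) := by
    rw [Finset.insert_subset_iff, Finset.singleton_subset_iff, Finset.mem_filter,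
      Finset.mem_filter]
    exact ⟨⟨hv, h1⟩, ⟨hw, h2⟩⟩
  calc 2 = ({v, w} : Finset (Fin n → ℤ)).card := (Finset.card_pair hvw).symm
    _ ≤ _ := Finset.card_le_card hsub

lemma tiles_one {V : Finset (Fin n → ℤ)} {L : Set (Fin n → ℤ)} (hT : IsTiling (↑V) L) :
    Tiles V L 1 := by
  classical
  intro x
  obtain ⟨⟨v, l⟩, hco, huniq⟩ := hT x
  have hv : v ∈ V := hco.1
  have hl : l ∈ L := hco.2.1
  have hvl : v + l = x := hco.2.2
  have : (V.filter fun a => x - (1:ℤ) • a ∈ L) = {v} := by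
    ext a
    simp only [Finset.mem_filter, Finset.mem_singleton, one_smul]
    constructor
    · rintro ⟨haV, haL⟩
      have := huniq (a, x - a) ⟨haV, haL, by rw [add_comm, sub_add_cancel]⟩
      exact congrArg Prod.fst this
    · rintro rfl
      refine ⟨hv, ?_⟩
      rw [show x - a = l from by rw [← hvl, add_sub_cancel_left]]
      exact hl
  rw [cnt, this, Finset.card_singleton]

section phi

variable {G : Type*} [AddCommGroup G] {R : Type*} [CommRing R]

/-- Pairing of an element of the group algebra with the translated weight `w`. -/
noncomputable def phi (w : G → R) (x : G) : AddMonoidAlgebra R G →ₗ[R] R :=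
  (Finsupp.linearCombination R fun z => w (x - z)) ∘ₗ (AddMonoidAlgebra.coeffLinearEquiv R).toLinearMap

lemma ama_induction {p : AddMonoidAlgebra R G → Prop} (f : AddMonoidAlgebra R G)
    (h0 : p 0) (hadd : ∀ f g : AddMonoidAlgebra R G, p f → p g → p (f + g))
    (hsingle : ∀ (z : G) (c : R), p (AddMonoidAlgebra.single z c)) : p f :=
  AddMonoidAlgebra.induction_linear f h0 hadd hsingle

lemma phi_single (w : G → R) (x z : G) (c : R) :
    phi w x (AddMonoidAlgebra.single z c) = c * w (x - z) := by
  show Finsupp.linearCombination R (fun z => w (x - z)) (Finsupp.single z c) = c * w (x - z)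
  rw [Finsupp.linearCombination_single, smul_eq_mul]

lemma phi_single_mul (w : G → R) (x z : G) (c : R) (ν : AddMonoidAlgebra R G) :
    phi w x (AddMonoidAlgebra.single z c * ν) = c * phi w (x - z) ν := by
  induction ν using ama_induction with
  | h0 => rw [mul_zero, map_zero, map_zero, mul_zero]
  | hadd f g hf hg => rw [mul_add, map_add, map_add, hf, hg, mul_add]
  | hsingle z' c' =>
    rw [AddMonoidAlgebra.single_mul_single, phi_single, phi_single, sub_sub]
    ring

/-- If pairing `α` against `w` is constantly `C`, then pairing `μ * α` gives `C · ε(μ)`,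
where the augmentation `ε` is realized as pairing with the constant weight `1`. -/
lemma phi_mul (w : G → R) (α : AddMonoidAlgebra R G) (C : R)
    (hα : ∀ y, phi w y α = C) (x : G) (μ : AddMonoidAlgebra R G) :
    phi w x (μ * α) = C * phi (fun _ => (1:R)) (0:G) μ := by
  induction μ using ama_induction with
  | h0 => rw [zero_mul, map_zero, map_zero, mul_zero]
  | hadd f g hf hg => rw [add_mul, map_add, map_add, hf, hg, mul_add]
  | hsingle z' c' =>
    rw [phi_single_mul, hα, phi_single]
    ring

end phi

open Classical in
/-- The weight function: indicator of `L` with values in `ZMod p`. -/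
noncomputable def wt (L : Set (Fin n → ℤ)) (p : ℕ) : (Fin n → ℤ) → ZMod p :=
  fun y => if y ∈ L then 1 else 0

open Classical in
lemma wt_eq (L : Set (Fin n → ℤ)) (p : ℕ) (y : Fin n → ℤ) :
    wt L p y = ((if y ∈ L then (1:ℕ) else 0 : ℕ) : ZMod p) := by
  rw [wt]
  split <;> simp

lemma step {V : Finset (Fin n → ℤ)} {L : Set (Fin n → ℤ)} (hV : V.Nonempty)
    {p : ℕ} (hp : p.Prime) (hpm : ¬ (p ∣ V.card)) {s : ℤ} (hs : Tiles V L s) :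
    Tiles V L ((p : ℤ) * s) := by
  classical
  haveI : Fact p.Prime := ⟨hp⟩
  -- casting the count to `ZMod p` via `phi`
  have hcast : ∀ (t : ℤ) (x : Fin n → ℤ),
      ((cnt V L t x : ℕ) : ZMod p) =
        phi (wt L p) x (∑ a ∈ V, AddMonoidAlgebra.single (t • a) (1 : ZMod p)) := by
    intro t x
    rw [map_sum, cnt_eq_sum, Nat.cast_sum]
    refine Finset.sum_congr rfl fun a _ => ?_
    rw [phi_single, one_mul, wt_eq]
  have hαval : ∀ y, phi (wt L p) y (∑ a ∈ V, AddMonoidAlgebra.single (s • a) (1 : ZMod p)) = 1 := by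
    intro y
    rw [← hcast s y, hs y, Nat.cast_one]
  -- characteristic p
  haveI : CharP (AddMonoidAlgebra (ZMod p) (Fin n → ℤ)) p := by
    refine charP_of_injective_algebraMap (R := ZMod p) ?_ p
    intro r r' h
    have h2 : AddMonoidAlgebra.single (0 : Fin n → ℤ) r
        = AddMonoidAlgebra.single (0 : Fin n → ℤ) r' := by
      simpa [AddMonoidAlgebra.coe_algebraMap] using h
    exact AddMonoidAlgebra.single_right_inj.mp h2
  -- Frobenius
  have hpow : (∑ a ∈ V, AddMonoidAlgebra.single (s • a) (1 : ZMod p)) ^ p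
      = ∑ a ∈ V, AddMonoidAlgebra.single (((p : ℤ) * s) • a) (1 : ZMod p) := by
    rw [sum_pow_char]
    refine Finset.sum_congr rfl fun a _ => ?_
    rw [AddMonoidAlgebra.single_pow, one_pow]
    congr 1
    rw [← Nat.cast_smul_eq_nsmul ℤ p (s • a), smul_smul]
  -- augmentation values
  have hepsα : ∀ y : Fin n → ℤ,
      phi (fun _ => (1 : ZMod p)) y (∑ a ∈ V, AddMonoidAlgebra.single (s • a) (1 : ZMod p))
        = (V.card : ZMod p) := by
    intro y
    rw [map_sum]
    rw [Finset.sum_congr rfl fun a _ => by rw [phi_single, one_mul]]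
    simp
  have hepspow : ∀ k : ℕ,
      phi (fun _ => (1 : ZMod p)) (0 : Fin n → ℤ)
        ((∑ a ∈ V, AddMonoidAlgebra.single (s • a) (1 : ZMod p)) ^ k) = (V.card : ZMod p) ^ k := by
    intro k
    induction k with
    | zero =>
      rw [pow_zero, pow_zero, AddMonoidAlgebra.one_def, phi_single, one_mul]
    | succ k ih =>
      rw [pow_succ, phi_mul (fun _ => (1 : ZMod p)) _ (V.card : ZMod p) hepsα, ih, pow_succ]
      ring
  -- the congruence : cnt (p*s) ≡ card ^ (p-1) mod p
  have hcong : ∀ x : Fin n → ℤ,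
      ((cnt V L ((p:ℤ) * s) x : ℕ) : ZMod p) = (V.card : ZMod p) ^ (p - 1) := by
    intro x
    rw [hcast ((p:ℤ) * s) x, ← hpow,
      show (∑ a ∈ V, AddMonoidAlgebra.single (s • a) (1 : ZMod p)) ^ p
        = (∑ a ∈ V, AddMonoidAlgebra.single (s • a) (1 : ZMod p)) ^ (p - 1)
          * (∑ a ∈ V, AddMonoidAlgebra.single (s • a) (1 : ZMod p)) from by
        rw [← pow_succ, Nat.sub_add_cancel hp.one_lt.le],
      phi_mul (wt L p) _ 1 hαval, one_mul, hepspow]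
  have hcardne : ((V.card : ZMod p)) ^ (p - 1) ≠ 0 := by
    apply pow_ne_zero
    rw [Ne, ZMod.natCast_eq_zero_iff]
    exact hpm
  have hge : ∀ x : Fin n → ℤ, 1 ≤ cnt V L ((p:ℤ) * s) x := by
    intro x
    rcases Nat.eq_zero_or_pos (cnt V L ((p:ℤ) * s) x) with h | h
    · exfalso
      apply hcardne
      rw [← hcong x, h, Nat.cast_zero]
    · exact h
  -- averaging upgrade : from `≥ 1` everywhere to `= 1` everywhere
  intro x
  obtain ⟨u0, hu0⟩ := hV
  have havg : ∑ u ∈ V, cnt V L ((p:ℤ) * s) (x + s • u0 - s • u) = V.card := by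
    have h1 : ∑ u ∈ V, cnt V L ((p:ℤ) * s) (x + s • u0 - s • u)
        = ∑ a ∈ V, cnt V L s (x + s • u0 - ((p:ℤ) * s) • a) := by
      rw [Finset.sum_congr rfl fun u _ => cnt_eq_sum V L ((p:ℤ) * s) (x + s • u0 - s • u),
        Finset.sum_congr rfl fun a _ => cnt_eq_sum V L s (x + s • u0 - ((p:ℤ) * s) • a),
        Finset.sum_comm]
      refine Finset.sum_congr rfl fun a _ => Finset.sum_congr rfl fun u _ => ?_
      have he : x + s • u0 - s • u - ((p:ℤ) * s) • a
          = x + s • u0 - ((p:ℤ) * s) • a - s • u := by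
        ext i
        simp only [Pi.add_apply, Pi.sub_apply, Pi.smul_apply, smul_eq_mul]
        ring
      rw [he]
    rw [h1, Finset.sum_congr rfl fun a _ => hs (x + s • u0 - ((p:ℤ) * s) • a),
      Finset.sum_const, smul_eq_mul, mul_one]
  have hall : ∀ u ∈ V, 1 = cnt V L ((p:ℤ) * s) (x + s • u0 - s • u) := by
    have hle : ∀ u ∈ V, (fun _ : Fin n → ℤ => 1) u ≤ cnt V L ((p:ℤ) * s) (x + s • u0 - s • u) :=
      fun u _ => hge _
    refine (Finset.sum_eq_sum_iff_of_le hle).mp ?_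
    rw [havg, Finset.sum_const, smul_eq_mul, mul_one]
  have hx0 := (hall u0 hu0).symm
  rwa [show x + s • u0 - s • u0 = x from by
    ext i
    simp only [Pi.add_apply, Pi.sub_apply, Pi.smul_apply, smul_eq_mul]
    ring] at hx0

lemma tiles_nat {V : Finset (Fin n → ℤ)} {L : Set (Fin n → ℤ)} (hV : V.Nonempty)
    (h1 : Tiles V L 1) :
    ∀ s : ℕ, 0 < s → Nat.Coprime s V.card → Tiles V L (s : ℤ) := by
  intro s
  induction s using Nat.strong_induction_on with
  | _ s ih =>
    intro hs hcop
    rcases eq_or_lt_of_le (show 1 ≤ s from hs) with h1' | h2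
    · rw [← h1']
      exact_mod_cast h1
    · have hs1 : s ≠ 1 := by omega
      set p := s.minFac with hpdef
      have hpprime : p.Prime := Nat.minFac_prime hs1
      have hpdvd : p ∣ s := Nat.minFac_dvd s
      obtain ⟨s', hs'⟩ := hpdvd
      have hs'pos : 0 < s' := by
        rcases Nat.eq_zero_or_pos s' with rfl | h
        · rw [Nat.mul_zero] at hs'
          omega
        · exact h
      have hs'lt : s' < s := by
        have hp2 : 2 ≤ p := hpprime.two_le
        nlinarith
      have hcop' : Nat.Coprime s' V.card :=
        Nat.Coprime.coprime_dvd_left ⟨p, hs'.trans (Nat.mul_comm p s')⟩ hcop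
      have hpm : ¬ (p ∣ V.card) := by
        intro hdvd
        have hg : p ∣ Nat.gcd s V.card := Nat.dvd_gcd ⟨s', hs'⟩ hdvd
        have hone : Nat.gcd s V.card = 1 := hcop
        rw [hone] at hg
        exact hpprime.one_lt.ne' (Nat.dvd_one.mp hg)
      have htile' := ih s' hs'lt hs'pos hcop'
      have hstep := step hV hpprime hpm htile'
      rwa [show ((p : ℤ) * (s' : ℤ)) = (s : ℤ) from by rw [hs']; push_cast; ring] at hstep

end Stmt4Aux

theorem stmt_4 {n : ℕ} (V : Finset (Fin n → ℤ)) (L : Set (Fin n → ℤ))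
    (hT : IsTiling (↑V) L) (a : ℤ) (ha : IsCoprime a (V.card : ℤ)) :
    ∀ l ∈ L, ∀ v ∈ V, ∀ w ∈ V, v ≠ w → l + a • (v - w) ∉ L := by
  classical
  intro l hl v hv w hw hvw hl'
  have hV : V.Nonempty := ⟨v, hv⟩
  have h1 : Stmt4Aux.Tiles V L 1 := Stmt4Aux.tiles_one hT
  rcases eq_or_ne a 0 with rfl | ha0
  · rw [isCoprime_zero_left] at ha
    have hcard : V.card = 1 := by
      rcases Int.isUnit_iff.mp ha with h | h
      · exact_mod_cast h
      · exfalso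
        have h0 : (0:ℤ) ≤ (V.card : ℤ) := Int.natCast_nonneg _
        omega
    obtain ⟨z, hz⟩ := Finset.card_eq_one.mp hcard
    apply hvw
    rw [hz] at hv hw
    rw [Finset.mem_singleton.mp hv, Finset.mem_singleton.mp hw]
  · set s : ℕ := a.natAbs with hsdef
    have hspos : 0 < s := Int.natAbs_pos.mpr ha0
    have hcop : Nat.Coprime s V.card := by
      have h := Int.isCoprime_iff_gcd_eq_one.mp ha
      rwa [Int.gcd_def, Int.natAbs_natCast] at h
    have htiles : Stmt4Aux.Tiles V L (s : ℤ) := Stmt4Aux.tiles_nat hV h1 s hspos hcop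
    rcases Int.natAbs_eq a with hcase | hcase
    · -- a = s
      have hvL : ((s:ℤ) • v + l) - (s:ℤ) • v ∈ L := by
        rw [show ((s:ℤ) • v + l) - (s:ℤ) • v = l from by
          ext i
          simp only [Pi.add_apply, Pi.sub_apply, Pi.smul_apply, smul_eq_mul]
          ring]
        exact hl
      have hwL : ((s:ℤ) • v + l) - (s:ℤ) • w ∈ L := by
        rw [show ((s:ℤ) • v + l) - (s:ℤ) • w = l + a • (v - w) from by
          rw [hcase]
          ext i
          simp only [Pi.add_apply, Pi.sub_apply, Pi.smul_apply, smul_eq_mul]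
          ring]
        exact hl'
      have h2 : 2 ≤ Stmt4Aux.cnt V L (s:ℤ) ((s:ℤ) • v + l) :=
        Stmt4Aux.two_le_cnt hvw hv hw hvL hwL
      rw [htiles ((s:ℤ) • v + l)] at h2
      omega
    · -- a = -s
      have hwL : ((s:ℤ) • w + l) - (s:ℤ) • w ∈ L := by
        rw [show ((s:ℤ) • w + l) - (s:ℤ) • w = l from by
          ext i
          simp only [Pi.add_apply, Pi.sub_apply, Pi.smul_apply, smul_eq_mul]
          ring]
        exact hl
      have hvL : ((s:ℤ) • w + l) - (s:ℤ) • v ∈ L := by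
        rw [show ((s:ℤ) • w + l) - (s:ℤ) • v = l + a • (v - w) from by
          rw [hcase]
          ext i
          simp only [Pi.add_apply, Pi.sub_apply, Pi.smul_apply, Pi.neg_apply, neg_smul,
            smul_eq_mul, Int.neg_mul]
          ring]
        exact hl'
      have h2 : 2 ≤ Stmt4Aux.cnt V L (s:ℤ) ((s:ℤ) • w + l) :=
        Stmt4Aux.two_le_cnt hvw hv hw hvL hwL
      rw [htiles ((s:ℤ) • w + l)] at h2
      omega
end

section
/- Let V ⊆ Z^n be a finite set of prime cardinality q, and let L ⊆ Z^n be such that {V + l : l ∈ L} tiles Z^n. Then for all v, w ∈ V, the vector q(v - w) is a period of the tiling, i.e., L + q(v - w) = L. -/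
/-- indicator of `L` with values in `ZMod q` -/
noncomputable def indL {n : ℕ} (L : Set (Fin n → ℤ)) (q : ℕ) (z : Fin n → ℤ) : ZMod q :=
  open scoped Classical in if z ∈ L then 1 else 0

/-- the evaluation functional -/
noncomputable def Phi {n : ℕ} (L : Set (Fin n → ℤ)) (q : ℕ) (x : Fin n → ℤ) :
    AddMonoidAlgebra (ZMod q) (Fin n → ℤ) →ₗ[ZMod q] ZMod q :=
  (Finsupp.linearCombination (ZMod q) (fun y => indL L q (x - y))).comp
    (AddMonoidAlgebra.coeffLinearEquiv (ZMod q)).toLinearMap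

lemma Phi_single {n : ℕ} (L : Set (Fin n → ℤ)) (q : ℕ) (x y : Fin n → ℤ) (c : ZMod q) :
    Phi L q x (AddMonoidAlgebra.single y c) = c * indL L q (x - y) := by
  change Finsupp.linearCombination (ZMod q) (fun y => indL L q (x - y)) (Finsupp.single y c) = _
  rw [Finsupp.linearCombination_single, smul_eq_mul]

lemma Phi_mul_single {n : ℕ} (L : Set (Fin n → ℤ)) (q : ℕ) (x v : Fin n → ℤ)
    (b : AddMonoidAlgebra (ZMod q) (Fin n → ℤ)) :
    Phi L q x (b * AddMonoidAlgebra.single v 1) = Phi L q (x - v) b := by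
  have h : (Phi L q x).comp (LinearMap.mulRight (ZMod q) (AddMonoidAlgebra.single v 1))
      = Phi L q (x - v) := by
    refine AddMonoidAlgebra.lhom_ext' fun a => LinearMap.ext fun c => ?_
    simp only [LinearMap.comp_apply, LinearMap.mulRight_apply]
    show Phi L q x (AddMonoidAlgebra.single a c * AddMonoidAlgebra.single v 1)
      = Phi L q (x - v) (AddMonoidAlgebra.single a c)
    rw [AddMonoidAlgebra.single_mul_single, mul_one, Phi_single, Phi_single]
    congr 1
    abel_nf
  calc Phi L q x (b * AddMonoidAlgebra.single v 1)
      = (Phi L q x).comp (LinearMap.mulRight (ZMod q) (AddMonoidAlgebra.single v 1)) b := rfl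
    _ = Phi L q (x - v) b := by rw [h]

/-- From the tiling hypothesis: the indicator sums to 1. -/
lemma sum_indL {n : ℕ} (V : Finset (Fin n → ℤ)) (L : Set (Fin n → ℤ)) (q : ℕ)
    (hT : IsTiling (↑V) L) (y : Fin n → ℤ) : ∑ v ∈ V, indL L q (y - v) = 1 := by
  classical
  obtain ⟨p₀, ⟨hp₀V, hp₀L, hp₀s⟩, huniq⟩ := hT y
  have hfilter : V.filter (fun v => y - v ∈ L) = {p₀.1} := by
    ext v
    simp only [Finset.mem_filter, Finset.mem_singleton]
    constructor
    · rintro ⟨hvV, hvL⟩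
      have := huniq (v, y - v) ⟨hvV, hvL, by simp⟩
      exact congrArg Prod.fst this
    · rintro rfl
      refine ⟨hp₀V, ?_⟩
      have : y - p₀.1 = p₀.2 := by rw [← hp₀s]; abel
      rw [this]; exact hp₀L
  have heq : ∑ v ∈ V, indL L q (y - v)
      = ∑ v ∈ V, (if y - v ∈ L then (1 : ZMod q) else 0) := by
    apply Finset.sum_congr rfl; intro v _; simp [indL]
  rw [heq, Finset.sum_boole, hfilter]
  simp

/-- The key divisibility: for all `x`, `∑_{v ∈ V} 1_L(x - q•v) = 0` in `ZMod q`. -/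
lemma key_sum {n : ℕ} (V : Finset (Fin n → ℤ)) (L : Set (Fin n → ℤ)) (q : ℕ)
    (hq : q.Prime) (hcard : V.card = q) (hT : IsTiling (↑V) L) (x : Fin n → ℤ) :
    ∑ v ∈ V, indL L q (x - (q : ℤ) • v) = 0 := by
  classical
  haveI : Fact q.Prime := ⟨hq⟩
  haveI : CharP (AddMonoidAlgebra (ZMod q) (Fin n → ℤ)) q := by
    refine charP_of_injective_algebraMap (R := ZMod q) (fun a b h => ?_) q
    have h' : AddMonoidAlgebra.single (0 : Fin n → ℤ) a = AddMonoidAlgebra.single 0 b := by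
      simpa [AddMonoidAlgebra.coe_algebraMap] using h
    exact AddMonoidAlgebra.single_right_inj.mp h'
  set a : AddMonoidAlgebra (ZMod q) (Fin n → ℤ) :=
    ∑ v ∈ V, AddMonoidAlgebra.single v 1 with ha
  have hPhi_mul : ∀ (x' : Fin n → ℤ) (b : AddMonoidAlgebra (ZMod q) (Fin n → ℤ)),
      Phi L q x' (b * a) = ∑ v ∈ V, Phi L q (x' - v) b := by
    intro x' b
    rw [ha, Finset.mul_sum, map_sum]
    exact Finset.sum_congr rfl fun v _ => Phi_mul_single L q x' v b
  have hPhi_a : ∀ x' : Fin n → ℤ, Phi L q x' a = 1 := by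
    intro x'
    rw [ha, map_sum]
    have h1 : ∀ v ∈ V, Phi L q x' (AddMonoidAlgebra.single v (1 : ZMod q))
        = indL L q (x' - v) := fun v _ => by rw [Phi_single, one_mul]
    rw [Finset.sum_congr rfl h1]
    exact sum_indL V L q hT x'
  have hpow : ∀ (k : ℕ) (x' : Fin n → ℤ), Phi L q x' (a ^ (k + 2)) = 0 := by
    intro k
    induction k with
    | zero =>
      intro x'
      rw [pow_succ, hPhi_mul]
      have h1 : ∀ v ∈ V, Phi L q (x' - v) (a ^ 1) = 1 := fun v _ => by
        rw [pow_one]; exact hPhi_a _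
      rw [Finset.sum_congr rfl h1, Finset.sum_const, hcard]
      simp
    | succ k ih =>
      intro x'
      rw [pow_succ, hPhi_mul]
      have h1 : ∀ v ∈ V, Phi L q (x' - v) (a ^ (k + 2)) = 0 := fun v _ => ih _
      rw [Finset.sum_congr rfl h1]
      simp
  have hfrob : a ^ q = ∑ v ∈ V, AddMonoidAlgebra.single ((q : ℕ) • v) (1 : ZMod q) := by
    rw [ha, sum_pow_char]
    exact Finset.sum_congr rfl fun v _ => by
      rw [AddMonoidAlgebra.single_pow, one_pow]
  have h2 : 2 ≤ q := hq.two_le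
  have hq0 : Phi L q x (a ^ q) = 0 := by
    have := hpow (q - 2) x
    rwa [Nat.sub_add_cancel h2] at this
  rw [hfrob, map_sum] at hq0
  calc ∑ v ∈ V, indL L q (x - (q : ℤ) • v)
      = ∑ v ∈ V, Phi L q x (AddMonoidAlgebra.single ((q : ℕ) • v) (1 : ZMod q)) := by
        refine Finset.sum_congr rfl fun v _ => ?_
        rw [Phi_single, one_mul, Nat.cast_smul_eq_nsmul]
    _ = 0 := hq0

/-- all-or-nothing -/
lemma all_or_nothing {n : ℕ} (V : Finset (Fin n → ℤ)) (L : Set (Fin n → ℤ)) (q : ℕ)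
    (hq : q.Prime) (hcard : V.card = q) (hT : IsTiling (↑V) L) (x : Fin n → ℤ) :
    (∀ v ∈ V, x - (q : ℤ) • v ∈ L) ∨ (∀ v ∈ V, x - (q : ℤ) • v ∉ L) := by
  classical
  have hsum := key_sum V L q hq hcard hT x
  have hsum' : ∑ v ∈ V, (if x - (q : ℤ) • v ∈ L then (1 : ZMod q) else 0) = 0 := by
    rw [← hsum]
    refine Finset.sum_congr rfl fun v _ => ?_
    unfold indL
    congr
  rw [Finset.sum_boole] at hsum'
  set c := (V.filter (fun v => x - (q : ℤ) • v ∈ L)).card with hc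
  have hdvd : q ∣ c := (ZMod.natCast_eq_zero_iff c q).mp hsum'
  have hle : c ≤ q := hcard ▸ Finset.card_filter_le _ _
  rcases Nat.eq_zero_or_pos c with h0 | hpos
  · right
    intro v hv hvL
    have hmem : v ∈ V.filter (fun v => x - (q : ℤ) • v ∈ L) := Finset.mem_filter.mpr ⟨hv, hvL⟩
    rw [Finset.card_eq_zero.mp h0] at hmem
    exact absurd hmem (Finset.notMem_empty v)
  · left
    have hcq : c = q := le_antisymm hle (Nat.le_of_dvd hpos hdvd)
    have hfV : V.filter (fun v => x - (q : ℤ) • v ∈ L) = V :=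
      Finset.eq_of_subset_of_card_le (Finset.filter_subset _ _)
        (by rw [hcard]; exact (hcq.symm.trans hc).le)
    intro v hv
    have hv' := hfV ▸ hv
    exact (Finset.mem_filter.mp hv').2

theorem stmt_5 {n : ℕ} (V : Finset (Fin n → ℤ)) (L : Set (Fin n → ℤ))
    (q : ℕ) (hq : q.Prime) (hcard : V.card = q)
    (hT : IsTiling (↑V) L) :
    ∀ v ∈ V, ∀ w ∈ V, (fun x => x + (q : ℤ) • (v - w)) '' L = L := by
  intro v hv w hw
  ext y
  simp only [Set.mem_image]
  constructor
  · rintro ⟨l, hl, rfl⟩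
    rcases all_or_nothing V L q hq hcard hT (l + (q : ℤ) • v) with h | h
    · have hw' := h w hw
      have heq : l + (q : ℤ) • v - (q : ℤ) • w = l + (q : ℤ) • (v - w) := by
        rw [smul_sub]; abel
      rwa [heq] at hw'
    · exact absurd (by rw [add_sub_cancel_right]; exact hl) (h v hv)
  · intro hy
    refine ⟨y - (q : ℤ) • (v - w), ?_, by abel⟩
    rcases all_or_nothing V L q hq hcard hT (y + (q : ℤ) • w) with h | h
    · have hv' := h v hv
      have heq : y + (q : ℤ) • w - (q : ℤ) • v = y - (q : ℤ) • (v - w) := by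
        rw [smul_sub]; abel
      rwa [heq] at hv'
    · exact absurd (by rw [add_sub_cancel_right]; exact hy) (h w hw)
end

section
/- Let V ⊆ Z^n be a finite set of prime cardinality q containing 0, and let L be a translate set for a tiling of Z^n by V. Then for every x ∈ Z^n and every v, w ∈ V: x ∈ L if and only if x + q(v - w) ∈ L. -/
namespace TilingAux

variable {n : ℕ}

/-- Unique representative form of the tiling property. -/
lemma uniq {V : Finset (Fin n → ℤ)} {L : Set (Fin n → ℤ)}
    (hT : IsTiling (↑V) L) (z : Fin n → ℤ) :
    ∃! a : Fin n → ℤ, a ∈ V ∧ z - a ∈ L := by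
  obtain ⟨p, ⟨h1, h2, h3⟩, hu⟩ := hT z
  refine ⟨p.1, ⟨h1, ?_⟩, ?_⟩
  · have : z - p.1 = p.2 := by rw [← h3]; ring
    rwa [this]
  · rintro a ⟨ha1, ha2⟩
    have := hu (a, z - a) ⟨ha1, ha2, by ring⟩
    exact congrArg Prod.fst this

/-- Splitting a sum over `ZMod q` at `0`. -/
lemma sum_split {q : ℕ} [NeZero q] {M : Type*} [AddCommMonoid M] (f : ZMod q → M) :
    ∑ i, f i = f 0 + ∑ i : {i : ZMod q // i ≠ 0}, f i.1 := by
  rw [Fintype.sum_eq_add_sum_compl (0 : ZMod q) f]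
  congr 1
  exact Finset.sum_subtype ({0}ᶜ : Finset (ZMod q)) (fun i => by simp) f

/-- Tuples indexed by `ZMod q` with entries in `V` whose sum, subtracted from `y`,
lands in `L`. -/
abbrev Tup (q : ℕ) [NeZero q] (V : Finset (Fin n → ℤ)) (L : Set (Fin n → ℤ))
    (y : Fin n → ℤ) : Type _ :=
  {t : ZMod q → ↥V // y - ∑ i, ((t i : Fin n → ℤ)) ∈ L}

instance rotSMul {q : ℕ} [NeZero q] (V : Finset (Fin n → ℤ)) (L : Set (Fin n → ℤ))
    (y : Fin n → ℤ) : SMul (Multiplicative (ZMod q)) (Tup q V L y) :=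
  ⟨fun g t => ⟨fun i => t.1 (i + Multiplicative.toAdd g), by
    have h : ∑ i, ((t.1 (i + Multiplicative.toAdd g) : Fin n → ℤ))
        = ∑ i, ((t.1 i : Fin n → ℤ)) :=
      Equiv.sum_comp (Equiv.addRight (Multiplicative.toAdd g))
        (fun i => (t.1 i : Fin n → ℤ))
    rw [h]; exact t.2⟩⟩

lemma rot_smul_apply {q : ℕ} [NeZero q] {V : Finset (Fin n → ℤ)} {L : Set (Fin n → ℤ)}
    {y : Fin n → ℤ} (g : Multiplicative (ZMod q)) (t : Tup q V L y) (i : ZMod q) :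
    (g • t).1 i = t.1 (i + Multiplicative.toAdd g) := rfl

instance rotAction {q : ℕ} [NeZero q] (V : Finset (Fin n → ℤ)) (L : Set (Fin n → ℤ))
    (y : Fin n → ℤ) : MulAction (Multiplicative (ZMod q)) (Tup q V L y) where
  one_smul t := Subtype.ext (funext fun i => by
    rw [rot_smul_apply]
    norm_num)
  mul_smul g h t := Subtype.ext (funext fun i => by
    rw [rot_smul_apply, rot_smul_apply, rot_smul_apply, toAdd_mul, add_assoc])

/-- Counting: the number of admissible tuples is `q ^ (q - 1)`. -/
lemma card_tup {q : ℕ} [NeZero q] {V : Finset (Fin n → ℤ)} {L : Set (Fin n → ℤ)}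
    (hcard : V.card = q) (hT : IsTiling (↑V) L) (y : Fin n → ℤ) :
    Nat.card (Tup q V L y) = q ^ (q - 1) := by
  classical
  -- restriction to nonzero coordinates is a bijection
  have key : Function.Bijective
      (fun (t : Tup q V L y) (i : {i : ZMod q // i ≠ 0}) => t.1 i.1) := by
    constructor
    · rintro t t' h
      set S : Fin n → ℤ := ∑ i : {i : ZMod q // i ≠ 0}, ((t.1 i.1 : Fin n → ℤ)) with hS
      have hsum : ∀ s : Tup q V L y,
          (∀ i : {i : ZMod q // i ≠ 0}, s.1 i.1 = t.1 i.1) →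
          (y - S) - (s.1 0 : Fin n → ℤ) ∈ L := by
        intro s hs
        have hsplit : ∑ i, ((s.1 i : Fin n → ℤ)) = (s.1 0 : Fin n → ℤ) + S := by
          rw [sum_split (fun i => ((s.1 i : Fin n → ℤ)))]
          congr 1
          exact Finset.sum_congr rfl (fun i _ => by rw [hs i])
        have h2 := s.2
        rw [hsplit] at h2
        have he : y - S - (s.1 0 : Fin n → ℤ) = y - ((s.1 0 : Fin n → ℤ) + S) := by ring
        rwa [he]
      have h0 : (t.1 0 : Fin n → ℤ) = (t'.1 0 : Fin n → ℤ) := by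
        obtain ⟨a, _, ha⟩ := uniq hT (y - S)
        have e1 := ha _ ⟨(t.1 0).2, hsum t (fun i => rfl)⟩
        have e2 := ha _ ⟨(t'.1 0).2, hsum t' (fun i => (congrFun h i).symm)⟩
        rw [e1, e2]
      apply Subtype.ext
      funext i
      by_cases hi : i = 0
      · subst hi; exact Subtype.ext h0
      · exact congrFun h ⟨i, hi⟩
    · intro r
      set S : Fin n → ℤ := ∑ i : {i : ZMod q // i ≠ 0}, ((r i : Fin n → ℤ)) with hS
      obtain ⟨a, ⟨haV, haL⟩, _⟩ := uniq hT (y - S)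
      set t0 : ZMod q → ↥V := fun i => if h : i = 0 then ⟨a, haV⟩ else r ⟨i, h⟩ with ht0
      have h00 : t0 0 = ⟨a, haV⟩ := by simp [ht0]
      have hne : ∀ i : {i : ZMod q // i ≠ 0}, t0 i.1 = r i := by
        intro i
        simp only [ht0]
        rw [dif_neg i.2]
      have hsplit : ∑ i : ZMod q, ((t0 i : Fin n → ℤ)) = a + S := by
        rw [sum_split (fun i => ((t0 i : Fin n → ℤ))), h00]
        congr 1
        exact Finset.sum_congr rfl (fun i _ => by rw [hne i])
      refine ⟨⟨t0, ?_⟩, ?_⟩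
      · rw [hsplit]
        have he : y - (a + S) = y - S - a := by ring
        rwa [he]
      · funext i
        exact hne i
  rw [Nat.card_congr (Equiv.ofBijective _ key), Nat.card_fun, Nat.card_eq_fintype_card,
    Nat.card_eq_fintype_card, Fintype.card_coe, hcard]
  congr 1
  have h1 : Fintype.card {i : ZMod q // i ≠ 0} = Fintype.card (ZMod q) - 1 := by
    rw [← Fintype.card_subtype_eq (0 : ZMod q)]
    exact Fintype.card_subtype_compl _
  rw [h1, ZMod.card]

/-- The fixed points of the rotation action correspond to elements `a ∈ V` with
`y - q • a ∈ L`. -/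
lemma card_fixed {q : ℕ} [NeZero q] {V : Finset (Fin n → ℤ)} {L : Set (Fin n → ℤ)}
    (y : Fin n → ℤ) :
    Nat.card (MulAction.fixedPoints (Multiplicative (ZMod q)) (Tup q V L y)) =
      Nat.card {a : ↥V // y - (q : ℤ) • (a : Fin n → ℤ) ∈ L} := by
  apply Nat.card_congr
  have const_sum : ∀ a : ↥V,
      ∑ _i : ZMod q, ((a : Fin n → ℤ)) = (q : ℤ) • (a : Fin n → ℤ) := by
    intro a
    rw [Finset.sum_const, Finset.card_univ, ZMod.card, natCast_zsmul]
  have hconst : ∀ t : MulAction.fixedPoints (Multiplicative (ZMod q)) (Tup q V L y),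
      ∀ i : ZMod q, t.1.1 i = t.1.1 0 := by
    intro t i
    have hfix := (MulAction.mem_fixedPoints.mp t.2) (Multiplicative.ofAdd i)
    have h0 := congrFun (congrArg Subtype.val hfix) 0
    rw [rot_smul_apply] at h0
    simpa using h0
  refine
    { toFun := fun t => ⟨t.1.1 0, ?_⟩
      invFun := fun a => ⟨⟨fun _ => a.1, ?_⟩, ?_⟩
      left_inv := ?_
      right_inv := ?_ }
  · have ht := t.1.2
    have hsum : ∑ i, ((t.1.1 i : Fin n → ℤ)) = (q : ℤ) • ((t.1.1 0 : Fin n → ℤ)) := by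
      rw [Finset.sum_congr rfl (fun i _ => by rw [hconst t i]), const_sum]
    rwa [hsum] at ht
  · rw [const_sum]; exact a.2
  · rw [MulAction.mem_fixedPoints]
    intro g
    apply Subtype.ext; funext i; rfl
  · intro t
    apply Subtype.ext; apply Subtype.ext; funext i
    exact (hconst t i).symm
  · intro a
    apply Subtype.ext; rfl

/-- Key step: if `y - q•v ∈ L` for some `v ∈ V` then `y - q•w ∈ L` for all `w ∈ V`. -/
lemma step {V : Finset (Fin n → ℤ)} {L : Set (Fin n → ℤ)} {q : ℕ}
    (hq : q.Prime) (hcard : V.card = q) (hT : IsTiling (↑V) L)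
    (y : Fin n → ℤ) {v w : Fin n → ℤ} (hv : v ∈ V) (hw : w ∈ V)
    (h : y - (q : ℤ) • v ∈ L) : y - (q : ℤ) • w ∈ L := by
  classical
  haveI : Fact q.Prime := ⟨hq⟩
  haveI : NeZero q := ⟨hq.pos.ne'⟩
  have hpg : IsPGroup q (Multiplicative (ZMod q)) :=
    IsPGroup.of_card (n := 1)
      (by rw [Nat.card_congr Multiplicative.toAdd, Nat.card_zmod, pow_one])
  have hmod := hpg.card_modEq_card_fixedPoints (Tup q V L y)
  rw [card_tup hcard hT y, card_fixed y] at hmod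
  set m := Nat.card {a : ↥V // y - (q : ℤ) • (a : Fin n → ℤ) ∈ L} with hm
  have hdvd : q ∣ m := by
    have h1 : (q : ℕ) ^ (q - 1) ≡ 0 [MOD q] :=
      Nat.modEq_zero_iff_dvd.mpr (dvd_pow_self q (Nat.sub_ne_zero_of_lt hq.one_lt))
    exact Nat.modEq_zero_iff_dvd.mp (hmod.symm.trans h1)
  have hle : m ≤ q := by
    calc m ≤ Nat.card ↥V := Nat.card_le_card_of_injective _ Subtype.val_injective
      _ = q := by rw [Nat.card_eq_fintype_card, Fintype.card_coe, hcard]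
  have hpos : 0 < m := by
    have : Nonempty {a : ↥V // y - (q : ℤ) • (a : Fin n → ℤ) ∈ L} := ⟨⟨⟨v, hv⟩, h⟩⟩
    exact Nat.card_pos
  have hmq : m = q := Nat.le_antisymm hle (Nat.le_of_dvd hpos hdvd)
  -- the inclusion of the subtype into `V` is bijective, hence `w` satisfies the property
  have hbij : Function.Bijective
      (Subtype.val : {a : ↥V // y - (q : ℤ) • (a : Fin n → ℤ) ∈ L} → ↥V) := by
    rw [Fintype.bijective_iff_injective_and_card]
    refine ⟨Subtype.val_injective, ?_⟩
    rw [← Nat.card_eq_fintype_card, ← Nat.card_eq_fintype_card, ← hm, hmq,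
      Nat.card_eq_fintype_card, Fintype.card_coe, hcard]
  obtain ⟨b, hb⟩ := hbij.2 ⟨w, hw⟩
  have := b.2
  rwa [hb] at this

end TilingAux

theorem stmt_6 {n : ℕ} (V : Finset (Fin n → ℤ)) (L : Set (Fin n → ℤ))
    (q : ℕ) (hq : q.Prime) (hcard : V.card = q) (h0 : (0 : Fin n → ℤ) ∈ V)
    (hT : IsTiling (↑V) L) :
    ∀ x : Fin n → ℤ, ∀ v ∈ V, ∀ w ∈ V, (x ∈ L ↔ x + (q : ℤ) • (v - w) ∈ L) := by
  intro x v hv w hw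
  have key : ∀ y : Fin n → ℤ, ∀ a ∈ V, ∀ b ∈ V,
      y - (q : ℤ) • a ∈ L → y - (q : ℤ) • b ∈ L :=
    fun y a ha b hb hy => TilingAux.step hq hcard hT y ha hb hy
  have e1 : (x + (q : ℤ) • v) - (q : ℤ) • v = x := by abel
  have e2 : (x + (q : ℤ) • v) - (q : ℤ) • w = x + (q : ℤ) • (v - w) := by
    rw [smul_sub]; abel
  constructor
  · intro hx
    have := key (x + (q : ℤ) • v) v hv w hw (by rwa [e1])
    rwa [e2] at this
  · intro hx
    have := key (x + (q : ℤ) • v) w hw v hv (by rwa [e2])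
    rwa [e1] at this
end

section
/- Let q be a prime, V = {0, v_1, ..., v_{q-1}} ⊆ Z^n with the v_i generating Z^n, and let φ : Z^{q-1} → Z^n be the surjective homomorphism sending e_i to v_i. If L ⊆ Z^n is a translate set for a tiling of Z^n by V, then φ^{-1}(L) is a translate set for a tiling of Z^{q-1} by the semi-cross {0, e_1, ..., e_{q-1}}. -/
/-- The semi-cross `{0, e_1, …, e_m}` in `ℤ^m`. -/
def semicross (m : ℕ) : Set (Fin m → ℤ) :=
  insert 0 (Set.range fun i : Fin m => Pi.single i 1)

theorem stmt_12 {n : ℕ} (q : ℕ) (hq : q.Prime) (v : Fin (q - 1) → (Fin n → ℤ))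
    (hinj : Function.Injective v) (h0 : (0 : Fin n → ℤ) ∉ Set.range v)
    (hgen : AddSubgroup.closure (Set.range v) = ⊤)
    (φ : (Fin (q - 1) → ℤ) →+ (Fin n → ℤ))
    (hφ : ∀ i : Fin (q - 1), φ (Pi.single i 1) = v i)
    (L : Set (Fin n → ℤ)) (hT : IsTiling (insert 0 (Set.range v)) L) :
    IsTiling (semicross (q - 1)) (φ ⁻¹' L) := by
  intro x
  obtain ⟨⟨w, l⟩, ⟨hw, hl, hsum⟩, huniq⟩ := hT (φ x)
  have himg : ∀ s ∈ semicross (q - 1), φ s ∈ insert 0 (Set.range v) := by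
    rintro s (rfl | ⟨i, rfl⟩)
    · simp
    · exact Set.mem_insert_of_mem _ ⟨i, (hφ i).symm⟩
  have hinj' : ∀ s ∈ semicross (q - 1), ∀ s' ∈ semicross (q - 1), φ s = φ s' → s = s' := by
    rintro s (rfl | ⟨i, rfl⟩) s' (rfl | ⟨j, rfl⟩) h
    · rfl
    · exact absurd ⟨j, by simpa [hφ] using h.symm⟩ h0
    · exact absurd ⟨i, by simpa [hφ] using h⟩ h0
    · exact congrArg (fun k => Pi.single k 1) (hinj (by simpa [hφ] using h))
  have uniq : ∀ p : (Fin (q - 1) → ℤ) × (Fin (q - 1) → ℤ),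
      (p.1 ∈ semicross (q - 1) ∧ p.2 ∈ φ ⁻¹' L ∧ p.1 + p.2 = x) →
      φ p.1 = w ∧ φ p.2 = l := by
    rintro ⟨s, y⟩ ⟨hs, hy, hsy⟩
    have h := huniq (φ s, φ y) ⟨himg s hs, hy, by rw [← map_add, hsy]⟩
    exact ⟨congrArg Prod.fst h, congrArg Prod.snd h⟩
  rcases hw with rfl | ⟨i, hi⟩
  · have hlx : l = φ x := by simpa using hsum
    refine ⟨(0, x), ⟨Set.mem_insert _ _, by simpa [← hlx] using hl, by simp⟩, ?_⟩
    rintro ⟨s, y⟩ h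
    obtain ⟨h1, h2⟩ := uniq _ h
    have hs0 : s = 0 := hinj' s h.1 0 (Set.mem_insert _ _) (by simp [h1])
    have hy0 : y = x := by
      have := h.2.2
      rw [hs0, zero_add] at this
      exact this
    simp [hs0, hy0]
  · have hlx : l = φ x - v i := by
      have := hsum
      rw [← hi] at this
      linear_combination this
    refine ⟨(Pi.single i 1, x - Pi.single i 1),
      ⟨Set.mem_insert_of_mem _ ⟨i, rfl⟩, ?_, by ring⟩, ?_⟩
    · show φ (x - Pi.single i 1) ∈ L
      rw [map_sub, hφ, ← hlx]
      exact hl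
    · rintro ⟨s, y⟩ h
      obtain ⟨h1, h2⟩ := uniq _ h
      have hs : s = Pi.single i 1 :=
        hinj' s h.1 (Pi.single i 1) (Set.mem_insert_of_mem _ ⟨i, rfl⟩)
          (by rw [h1, hφ, hi])
      have hy : y = x - Pi.single i 1 := by
        have := h.2.2
        rw [hs] at this
        linear_combination this
      simp [hs, hy]
end

section
/- For each odd prime q, there exists a cyclic lattice tiling of Z^{q-1} by the semi-cross V = {0, e_1, ..., e_{q-1}}: namely, if t is a primitive root modulo q and φ : Z^{q-1} → Z/qZ is the homomorphism with φ(e_i) = t^{i-1}, then L = ker(φ) is a translate set for a tiling, and L is closed under the cyclic shift of coordinates π(a_1, ..., a_{q-1}) = (a_2, ..., a_{q-1}, a_1). -/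
theorem stmt_18 (q : ℕ) (hq : q.Prime) (hodd : Odd q)
    (t : ZMod q) (ht : ∀ a : ZMod q, a ≠ 0 → ∃ k : ℕ, t ^ k = a)
    (φ : (Fin (q - 1) → ℤ) →+ ZMod q)
    (hφ : ∀ i : Fin (q - 1), φ (Pi.single i 1) = t ^ (i : ℕ)) :
    IsTiling (semicross (q - 1)) (φ.ker : Set (Fin (q - 1) → ℤ)) ∧
      ∀ a : Fin (q - 1) → ℤ, a ∈ φ.ker →
        (fun i : Fin (q - 1) =>
          a ⟨((i : ℕ) + 1) % (q - 1), Nat.mod_lt _ (by have := hq.two_le; omega)⟩) ∈ φ.ker := by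
  have hq2 := hq.two_le
  have hq3 : 3 ≤ q := by rcases hodd with ⟨k, hk⟩; omega
  haveI : Fact q.Prime := ⟨hq⟩
  have hn : 0 < q - 1 := by omega
  -- t ≠ 0
  have ht0 : t ≠ 0 := by
    have h2 : (2 : ZMod q) ≠ 0 := by
      have : ((2 : ℕ) : ZMod q) ≠ 0 := by
        rw [Ne, ZMod.natCast_eq_zero_iff]
        intro h
        have := Nat.le_of_dvd (by omega) h
        omega
      simpa using this
    obtain ⟨k, hk⟩ := ht 2 h2
    intro h
    subst h
    rcases k with _ | k
    · simp at hk
      have : ((2 : ℕ) : ZMod q) = ((1 : ℕ) : ZMod q) := by push_cast; exact hk.symm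
      rw [ZMod.natCast_eq_natCast_iff] at this
      have h' : 2 % q = 1 % q := this
      rw [Nat.mod_eq_of_lt (by omega), Nat.mod_eq_of_lt (by omega)] at h'
      omega
    · rw [pow_succ, mul_zero] at hk
      exact h2 hk.symm
  have htq : t ^ (q - 1) = 1 := ZMod.pow_card_sub_one_eq_one ht0
  have hfin : IsOfFinOrder t := isOfFinOrder_iff_pow_eq_one.mpr ⟨q - 1, hn, htq⟩
  have hord_pos : 0 < orderOf t := hfin.orderOf_pos
  have hord_dvd : orderOf t ∣ q - 1 := orderOf_dvd_of_pow_eq_one htq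
  -- order of t is exactly q - 1
  have hsurj : Function.Surjective
      (fun k : Fin (orderOf t) => (⟨t ^ (k : ℕ), pow_ne_zero _ ht0⟩ : {a : ZMod q // a ≠ 0})) := by
    rintro ⟨a, ha⟩
    obtain ⟨k, hk⟩ := ht a ha
    refine ⟨⟨k % orderOf t, Nat.mod_lt _ hord_pos⟩, ?_⟩
    simp only [Subtype.mk.injEq]
    rw [pow_mod_orderOf, hk]
  have hcard : q - 1 ≤ orderOf t := by
    have := Fintype.card_le_of_surjective _ hsurj
    have hc : Fintype.card {a : ZMod q // a ≠ 0} = q - 1 := by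
      have := Fintype.card_subtype_compl (fun a : ZMod q => a = 0)
      simp only [Fintype.card_subtype_eq, ZMod.card] at this
      convert this using 2
    simpa [hc] using this
  have hord : orderOf t = q - 1 := le_antisymm (Nat.le_of_dvd hn hord_dvd) hcard
  -- injectivity of powers below q - 1
  have hpow_inj : ∀ i j : ℕ, i < q - 1 → j < q - 1 → t ^ i = t ^ j → i = j := by
    have key : ∀ i j : ℕ, i ≤ j → j < q - 1 → t ^ i = t ^ j → i = j := by
      intro i j hij hj h
      by_contra hne
      have hlt : i < j := lt_of_le_of_ne hij hne
      have h1 : t ^ i * t ^ (j - i) = t ^ i * 1 := by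
        rw [mul_one, ← pow_add]
        rw [h]; congr 1; omega
      have h2 : t ^ (j - i) = 1 := mul_left_cancel₀ (pow_ne_zero _ ht0) h1
      have := orderOf_dvd_of_pow_eq_one h2
      rw [hord] at this
      have := Nat.le_of_dvd (by omega) this
      omega
    intro i j hi hj h
    rcases le_total i j with hle | hle
    · exact key i j hle hj h
    · exact (key j i hle hi h.symm).symm
  -- formula for φ
  have hφa : ∀ a : Fin (q - 1) → ℤ, φ a = ∑ i, a i • t ^ (i : ℕ) := by
    intro a
    conv_lhs => rw [← Finset.univ_sum_single a, map_sum]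
    refine Finset.sum_congr rfl fun i _ => ?_
    have h1 : Pi.single i (a i) = a i • (Pi.single i (1 : ℤ) : Fin (q - 1) → ℤ) := by
      ext j
      by_cases h : j = i <;> simp [Pi.single_apply, h]
    rw [h1, map_zsmul, hφ]
  -- φ value on semicross elements
  have hφ0 : φ (0 : Fin (q - 1) → ℤ) = 0 := map_zero φ
  -- injectivity of φ on the semicross
  have hVinj : ∀ v ∈ semicross (q - 1), ∀ w ∈ semicross (q - 1), φ v = φ w → v = w := by
    rintro v hv w hw h
    rcases hv with rfl | ⟨i, rfl⟩ <;> rcases hw with rfl | ⟨j, rfl⟩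
    · rfl
    · rw [hφ0, hφ j] at h
      exact absurd h.symm (pow_ne_zero _ ht0)
    · rw [hφ0, hφ i] at h
      exact absurd h (pow_ne_zero _ ht0)
    · rw [hφ i, hφ j] at h
      have hij : i = j := Fin.ext (hpow_inj i j i.isLt j.isLt h)
      subst hij
      rfl
  -- surjectivity of φ from semicross onto ZMod q
  have hVsurj : ∀ c : ZMod q, ∃ v ∈ semicross (q - 1), φ v = c := by
    intro c
    by_cases hc : c = 0
    · exact ⟨0, Set.mem_insert _ _, by rw [hφ0, hc]⟩
    · obtain ⟨k, hk⟩ := ht c hc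
      refine ⟨Pi.single ⟨k % (q - 1), Nat.mod_lt _ hn⟩ (1 : ℤ),
        Set.mem_insert_of_mem _ ⟨_, rfl⟩, ?_⟩
      rw [hφ]
      simp only
      rw [← hord, pow_mod_orderOf, hk]
  constructor
  · -- tiling
    intro x
    obtain ⟨v, hv, hvc⟩ := hVsurj (φ x)
    refine ⟨(v, x - v), ⟨hv, ?_, by simp⟩, ?_⟩
    · simp only [SetLike.mem_coe, AddMonoidHom.mem_ker, map_sub, hvc, sub_self]
    · rintro ⟨v', l'⟩ ⟨hv', hl', hsum⟩
      have hker : φ l' = 0 := hl'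
      have hφv' : φ v' = φ v := by
        have : φ v' + φ l' = φ x := by rw [← map_add, hsum]
        rw [hker, add_zero] at this
        rw [this, hvc]
      have hvv : v' = v := hVinj v' hv' v hv hφv'
      have : l' = x - v := by
        rw [← hsum, hvv]; ring
      rw [hvv, this]
  · -- cyclicity
    intro a ha
    have ha0 : φ a = 0 := ha
    set σ : Fin (q - 1) → Fin (q - 1) := fun i =>
      ⟨((i : ℕ) + 1) % (q - 1), Nat.mod_lt _ (by have := hq.two_le; omega)⟩ with hσ
    have hσinj : Function.Injective σ := by
      intro i j h
      have h' : ((i : ℕ) + 1) % (q - 1) = ((j : ℕ) + 1) % (q - 1) := congrArg Fin.val h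
      have hi := i.isLt
      have hj := j.isLt
      have hi1 : ((i : ℕ) + 1) % (q - 1) = (i : ℕ) + 1 ∨
          (((i : ℕ) + 1) % (q - 1) = 0 ∧ (i : ℕ) + 1 = q - 1) := by
        rcases Nat.lt_or_ge ((i : ℕ) + 1) (q - 1) with h1 | h1
        · exact Or.inl (Nat.mod_eq_of_lt h1)
        · have he : (i : ℕ) + 1 = q - 1 := by omega
          exact Or.inr ⟨by rw [he, Nat.mod_self], he⟩
      have hj1 : ((j : ℕ) + 1) % (q - 1) = (j : ℕ) + 1 ∨
          (((j : ℕ) + 1) % (q - 1) = 0 ∧ (j : ℕ) + 1 = q - 1) := by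
        rcases Nat.lt_or_ge ((j : ℕ) + 1) (q - 1) with h1 | h1
        · exact Or.inl (Nat.mod_eq_of_lt h1)
        · have he : (j : ℕ) + 1 = q - 1 := by omega
          exact Or.inr ⟨by rw [he, Nat.mod_self], he⟩
      apply Fin.ext
      omega
    have hσbij : Function.Bijective σ := (Finite.injective_iff_bijective).mp hσinj
    show φ (fun i => a (σ i)) = 0
    have key : t * φ (fun i => a (σ i)) = φ a := by
      rw [hφa, hφa, Finset.mul_sum]
      have h1 : ∀ i : Fin (q - 1), t * (a (σ i) • t ^ (i : ℕ)) = a (σ i) • t ^ ((σ i : ℕ)) := by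
        intro i
        rw [mul_smul_comm]
        congr 1
        rw [← pow_succ']
        have h2 : ((σ i : ℕ)) = ((i : ℕ) + 1) % (q - 1) := rfl
        have h3 := pow_mod_orderOf t ((i : ℕ) + 1)
        rw [hord] at h3
        rw [h2]
        exact h3.symm
      calc ∑ i, t * (a (σ i) • t ^ (i : ℕ))
          = ∑ i, a (σ i) • t ^ ((σ i : ℕ)) := Finset.sum_congr rfl fun i _ => h1 i
        _ = ∑ j, a j • t ^ (j : ℕ) := Fintype.sum_bijective σ hσbij _ _ fun i => rfl
    rw [ha0] at key
    rcases mul_eq_zero.mp key with h | h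
    · exact absurd h ht0
    · exact h
end
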